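/- arXiv:1412.6185 — 7 statements merged into one kernel-verified Lean document; each statement's English description precedes it below -/
import Mathlib

section
/- Let α > 1/2 be real and let θ ∈ ℝ³ satisfy θ₁+θ₃ > 0, θ₂+θ₃ > 0 and θ₁θ₂+θ₁θ₃+θ₂θ₃ > 0 (i.e. θ lies in the hyperbolicity cone of E₂ containing (1,1,1)). Set K = {σ ∈ ℝ³ : σ₁ ≥ 0, σ₂ ≥ 0, and 2(σ₁σ₂+σ₁σ₃+σ₂σ₃) ≥ σ₁²+σ₂²+σ₃²}. Then (θ₁θ₂+θ₁θ₃+θ₂θ₃)^{−α} = (2^{2−2α}/Γ₂(α)) · ∫_K exp(−θ₁σ₁−θ₂σ₂−θ₃σ₃) · (2(σ₁σ₂+σ₁σ₃+σ₂σ₃) − σ₁²−σ₂²−σ₃²)^{α−3/2} dσ, where Γ₂(α) = π^{1/2} Γ(α) Γ(α−1/2) and the integral is with respect to Lebesgue measure on ℝ³. -/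
open MeasureTheory

namespace Stmt4Aux
open Real Set
open scoped ENNReal

section helpers

lemma L1set {s c : ℝ} (hs : 0 < s) (hc : 0 < c) :
    ∫⁻ w in Ioi (0:ℝ), ENNReal.ofReal (w ^ (s - 1) * Real.exp (-(c * w))) =
      ENNReal.ofReal ((1 / c) ^ s * Real.Gamma s) := by
  have hint : IntegrableOn (fun w => w ^ (s - 1) * Real.exp (-(c * w))) (Ioi 0) := by
    have := integrableOn_rpow_mul_exp_neg_mul_rpow (p := 1) (s := s - 1) (b := c)
      (by linarith) (by norm_num) hc
    refine this.congr_fun (fun x hx => ?_) measurableSet_Ioi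
    simp only [Real.rpow_one, neg_mul]
  rw [← ofReal_integral_eq_lintegral_ofReal hint ?_]
  · rw [integral_rpow_mul_exp_neg_mul_Ioi hs hc]
  · filter_upwards [ae_restrict_mem measurableSet_Ioi] with w hw
    have : (0:ℝ) < w := hw
    positivity

lemma L1if {s c : ℝ} (hs : 0 < s) (hc : 0 < c) :
    ∫⁻ w : ℝ, ENNReal.ofReal (if 0 ≤ w then w ^ (s - 1) * Real.exp (-(c * w)) else 0) =
      ENNReal.ofReal ((1 / c) ^ s * Real.Gamma s) := by
  rw [← L1set hs hc]
  rw [← lintegral_indicator measurableSet_Ioi]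
  apply lintegral_congr_ae
  filter_upwards [compl_mem_ae_iff.2 (volume_singleton (a := (0:ℝ)))] with w hw
  simp only [mem_compl_iff, mem_singleton_iff] at hw
  rcases lt_trichotomy w 0 with h | h | h
  · rw [if_neg (not_le.2 h), indicator_of_notMem (by simpa using h.le)]
    simp
  · exact absurd h hw
  · rw [if_pos h.le, indicator_of_mem (mem_Ioi.2 h)]

lemma L2int {p q : ℝ} (hp : 0 < p) :
    Integrable (fun t : ℝ => Real.exp (-(p * t ^ 2) + q * t)) := by
  have key : ∀ t : ℝ, Real.exp (-(p * t ^ 2) + q * t) =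
      Real.exp (q ^ 2 / (4 * p)) * Real.exp (-p * (t - q / (2 * p)) ^ 2) := by
    intro t
    rw [← Real.exp_add]
    congr 1
    field_simp
    ring
  simp_rw [key]
  exact ((integrable_exp_neg_mul_sq hp).comp_sub_right (q / (2 * p))).const_mul _

lemma L2 {p q : ℝ} (hp : 0 < p) :
    ∫ t : ℝ, Real.exp (-(p * t ^ 2) + q * t) =
      Real.sqrt (π / p) * Real.exp (q ^ 2 / (4 * p)) := by
  have key : ∀ t : ℝ, Real.exp (-(p * t ^ 2) + q * t) =
      Real.exp (q ^ 2 / (4 * p)) * Real.exp (-p * (t - q / (2 * p)) ^ 2) := by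
    intro t
    rw [← Real.exp_add]
    congr 1
    field_simp
    ring
  simp_rw [key]
  rw [MeasureTheory.integral_const_mul]
  rw [integral_sub_right_eq_self (fun t => Real.exp (-p * t ^ 2)) (q / (2 * p))]
  rw [integral_gaussian]
  ring

lemma L2lin {p q : ℝ} (hp : 0 < p) :
    ∫⁻ t : ℝ, ENNReal.ofReal (Real.exp (-(p * t ^ 2) + q * t)) =
      ENNReal.ofReal (Real.sqrt (π / p) * Real.exp (q ^ 2 / (4 * p))) := by
  rw [← ofReal_integral_eq_lintegral_ofReal (L2int hp)
    (Filter.Eventually.of_forall fun t => (Real.exp_pos _).le), L2 hp]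

lemma lintegral_fin3 (f : ℝ → ℝ → ℝ → ℝ≥0∞)
    (hf : Measurable fun p : ℝ × ℝ × ℝ => f p.1 p.2.1 p.2.2) :
    ∫⁻ σ : Fin 3 → ℝ, f (σ 0) (σ 1) (σ 2) = ∫⁻ x, ∫⁻ y, ∫⁻ z, f x y z := by
  have e1 := measurePreserving_piFinSuccAbove (fun _ : Fin 3 => (volume : Measure ℝ)) 0
  have e2 := measurePreserving_finTwoArrow (volume : Measure ℝ)
  have hg : Measurable fun p : ℝ × (Fin 2 → ℝ) => f p.1 (p.2 0) (p.2 1) := by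
    have h1 : Measurable fun p : ℝ × (Fin 2 → ℝ) => (p.1, (p.2 0, p.2 1)) :=
      measurable_fst.prodMk (((measurable_pi_apply 0).comp measurable_snd).prodMk
        ((measurable_pi_apply 1).comp measurable_snd))
    exact hf.comp h1
  calc ∫⁻ σ : Fin 3 → ℝ, f (σ 0) (σ 1) (σ 2)
      = ∫⁻ p : ℝ × (Fin 2 → ℝ), f p.1 (p.2 0) (p.2 1)
        ∂((volume : Measure ℝ).prod (Measure.pi fun _ => volume)) := by
        rw [volume_pi, ← e1.lintegral_comp hg]
        rfl
    _ = ∫⁻ x, ∫⁻ v : Fin 2 → ℝ, f x (v 0) (v 1) ∂(Measure.pi fun _ => volume) := by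
        rw [lintegral_prod _ hg.aemeasurable]
    _ = ∫⁻ x, ∫⁻ y, ∫⁻ z, f x y z := by
        congr 1
        ext x
        have hgx : Measurable fun p : ℝ × ℝ => f x p.1 p.2 :=
          hf.comp (measurable_const.prodMk measurable_id)
        have : (∫⁻ v : Fin 2 → ℝ, f x (v 0) (v 1) ∂(Measure.pi fun _ => volume)) =
            ∫⁻ p : ℝ × ℝ, f x p.1 p.2 ∂((volume : Measure ℝ).prod volume) := by
          rw [← e2.lintegral_comp hgx]; rfl
        rw [this, lintegral_prod _ hgx.aemeasurable]

end helpers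

section key

variable {α a b c : ℝ}

lemma finalarith (hα : 1 / 2 < α) (hc : 0 < c) (hE : 0 < a * c - b ^ 2) :
    (4:ℝ) ^ (α - 3/2) * (1/c) ^ (α - 1/2) * Real.Gamma (α - 1/2) * Real.sqrt (4 * π / c) *
      ((1 / ((a * c - b ^ 2) / c)) ^ α * Real.Gamma α) =
    2 ^ (2*α - 2) * π ^ ((1:ℝ)/2) * Real.Gamma α * Real.Gamma (α - 1/2) *
      (a * c - b ^ 2) ^ (-α) := by
  set E := a * c - b ^ 2 with hEdef
  have hπ : (0:ℝ) < π := Real.pi_pos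
  have e1 : Real.sqrt (4 * π / c) = 4 ^ ((1:ℝ)/2) * π ^ ((1:ℝ)/2) * (1/c) ^ ((1:ℝ)/2) := by
    rw [show 4 * π / c = 4 * (π * (1/c)) by ring, Real.sqrt_eq_rpow,
      Real.mul_rpow (by norm_num) (by positivity),
      Real.mul_rpow (by positivity) (by positivity)]
    ring
  have e2 : (4:ℝ) ^ (α - 3/2) * 4 ^ ((1:ℝ)/2) = 2 ^ (2*α - 2) := by
    rw [← Real.rpow_add (by norm_num)]
    rw [show (4:ℝ) = 2 ^ (2:ℝ) by
      rw [show (2:ℝ) = ((2:ℕ):ℝ) by norm_num, Real.rpow_natCast]; norm_num]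
    rw [← Real.rpow_mul (by norm_num)]
    congr 1
    ring
  have e3 : (1/c : ℝ) ^ (α - 1/2) * (1/c) ^ ((1:ℝ)/2) = (1/c) ^ α := by
    rw [← Real.rpow_add (by positivity)]
    norm_num
  have e4 : (1 / (E / c)) ^ α = c ^ α * (1/E) ^ α := by
    rw [show 1 / (E / c) = c * (1/E) by field_simp, Real.mul_rpow hc.le (by positivity)]
  have e5 : (1/c : ℝ) ^ α * c ^ α = 1 := by
    rw [← Real.mul_rpow (by positivity) hc.le]
    rw [show (1/c) * c = 1 by field_simp]
    exact Real.one_rpow α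
  have e6 : (1/E : ℝ) ^ α = E ^ (-α) := by
    rw [one_div, Real.rpow_neg hE.le, Real.inv_rpow hE.le]
  calc (4:ℝ) ^ (α - 3/2) * (1/c) ^ (α - 1/2) * Real.Gamma (α - 1/2) * Real.sqrt (4 * π / c) *
      ((1 / (E / c)) ^ α * Real.Gamma α)
      = ((4:ℝ) ^ (α - 3/2) * 4 ^ ((1:ℝ)/2)) * ((1/c) ^ (α - 1/2) * (1/c) ^ ((1:ℝ)/2)) *
        π ^ ((1:ℝ)/2) * Real.Gamma (α - 1/2) * ((1 / (E / c)) ^ α * Real.Gamma α) := by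
        rw [e1]; ring
    _ = 2 ^ (2*α - 2) * (1/c) ^ α * π ^ ((1:ℝ)/2) * Real.Gamma (α - 1/2) *
        (c ^ α * (1/E) ^ α * Real.Gamma α) := by rw [e2, e3, e4]
    _ = 2 ^ (2*α - 2) * π ^ ((1:ℝ)/2) * Real.Gamma α * Real.Gamma (α - 1/2) *
        (((1/c) ^ α * c ^ α) * (1/E) ^ α) := by ring
    _ = _ := by rw [e5, e6]; ring

lemma keylint (hα : 1 / 2 < α) (ha : 0 < a) (hc : 0 < c) (hE : 0 < a * c - b ^ 2) :
    (∫⁻ x : ℝ, ∫⁻ y : ℝ, ∫⁻ z : ℝ, ENNReal.ofReal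
      (if 0 ≤ x ∧ 0 ≤ y ∧ x^2 + y^2 + z^2 ≤ 2*(x*y + x*z + y*z) then
        Real.exp (-((a-b)*x + (c-b)*y + b*z)) *
          (2*(x*y + x*z + y*z) - x^2 - y^2 - z^2) ^ (α - 3/2) else 0))
    = ENNReal.ofReal (2 ^ (2*α - 2) * π ^ ((1:ℝ)/2) * Real.Gamma α * Real.Gamma (α - 1/2) *
        (a * c - b ^ 2) ^ (-α)) := by
  have hs : 0 < α - 1/2 := by linarith
  have hΓpos : 0 < Real.Gamma (α - 1/2) := Real.Gamma_pos_of_pos hs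
  set d : ℝ := (a * c - b ^ 2) / c with hd
  have hdpos : 0 < d := by positivity
  set h : ℝ → ℝ → ℝ → ℝ≥0∞ := fun x y t => ENNReal.ofReal
    (if 0 ≤ x ∧ 0 ≤ y ∧ t^2 ≤ 4*(x*y) then
      Real.exp (-(a*x + c*y + b*t)) * (4*(x*y) - t^2) ^ (α - 3/2) else 0) with hh
  have hmeas : Measurable fun p : ℝ × ℝ × ℝ => h p.1 p.2.1 p.2.2 := by
    rw [hh]
    apply ENNReal.measurable_ofReal.comp
    apply Measurable.ite
    · rw [Set.setOf_and, Set.setOf_and]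
      refine MeasurableSet.inter ?_ (MeasurableSet.inter ?_ ?_)
      · exact measurableSet_le measurable_const measurable_fst
      · exact measurableSet_le measurable_const (measurable_fst.comp measurable_snd)
      · exact measurableSet_le ((measurable_snd.comp measurable_snd).pow measurable_const)
          (measurable_const.mul (measurable_fst.mul (measurable_fst.comp measurable_snd)))
    · apply Measurable.mul
      · exact (measurable_const.mul measurable_fst |>.add
          (measurable_const.mul (measurable_fst.comp measurable_snd)) |>.add
          (measurable_const.mul (measurable_snd.comp measurable_snd))).neg.exp
      · exact ((measurable_const.mul (measurable_fst.mul
          (measurable_fst.comp measurable_snd))).sub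
          ((measurable_snd.comp measurable_snd).pow measurable_const)).pow measurable_const
    · exact measurable_const
  -- step 1 : z-translation
  have step1 : ∀ x y : ℝ, (∫⁻ t : ℝ, h x y t) = ∫⁻ z : ℝ, ENNReal.ofReal
      (if 0 ≤ x ∧ 0 ≤ y ∧ x^2 + y^2 + z^2 ≤ 2*(x*y + x*z + y*z) then
        Real.exp (-((a-b)*x + (c-b)*y + b*z)) *
          (2*(x*y + x*z + y*z) - x^2 - y^2 - z^2) ^ (α - 3/2) else 0) := by
    intro x y
    calc (∫⁻ t : ℝ, h x y t)
        = ∫⁻ t : ℝ, ENNReal.ofReal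
          (if 0 ≤ x ∧ 0 ≤ y ∧ x^2 + y^2 + (t+(x+y))^2 ≤
              2*(x*y + x*(t+(x+y)) + y*(t+(x+y))) then
            Real.exp (-((a-b)*x + (c-b)*y + b*(t+(x+y)))) *
              (2*(x*y + x*(t+(x+y)) + y*(t+(x+y))) - x^2 - y^2 - (t+(x+y))^2) ^ (α - 3/2)
            else 0) := by
          refine lintegral_congr fun t => ?_
          simp only [hh]
          congr 1
          refine if_congr ?_ ?_ rfl
          · constructor
            · rintro ⟨h1, h2, h3⟩; exact ⟨h1, h2, by nlinarith⟩
            · rintro ⟨h1, h2, h3⟩; exact ⟨h1, h2, by nlinarith⟩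
          · rw [show -(a*x + c*y + b*t) = -((a-b)*x + (c-b)*y + b*(t+(x+y))) by ring,
              show 4*(x*y) - t^2 =
                2*(x*y + x*(t+(x+y)) + y*(t+(x+y))) - x^2 - y^2 - (t+(x+y))^2 by ring]
      _ = _ := lintegral_add_right_eq_self (fun z : ℝ => ENNReal.ofReal
            (if 0 ≤ x ∧ 0 ≤ y ∧ x^2 + y^2 + z^2 ≤ 2*(x*y + x*z + y*z) then
              Real.exp (-((a-b)*x + (c-b)*y + b*z)) *
                (2*(x*y + x*z + y*z) - x^2 - y^2 - z^2) ^ (α - 3/2) else 0)) (x + y)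
  -- step 4 : inner double integral for x > 0
  have step4 : ∀ x : ℝ, 0 < x → ∀ t : ℝ, (∫⁻ y : ℝ, h x y t) =
      ENNReal.ofReal (Real.exp (-(a*x + b*t + c*(t^2/(4*x)))) * (4*x) ^ (α - 3/2) *
        ((1/c) ^ (α - 1/2) * Real.Gamma (α - 1/2))) := by
    intro x hx t
    have hx4 : (0:ℝ) < 4 * x := by linarith
    calc (∫⁻ y : ℝ, h x y t)
        = ∫⁻ w : ℝ, h x (w + t^2/(4*x)) t :=
          (lintegral_add_right_eq_self (fun y => h x y t) (t^2/(4*x))).symm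
      _ = ∫⁻ w : ℝ, ENNReal.ofReal (Real.exp (-(a*x + b*t + c*(t^2/(4*x)))) *
            (4*x) ^ (α - 3/2)) *
          ENNReal.ofReal (if 0 ≤ w then w ^ (α - 1/2 - 1) * Real.exp (-(c * w)) else 0) := by
          refine lintegral_congr fun w => ?_
          simp only [hh]
          rw [← ENNReal.ofReal_mul (by positivity)]
          congr 1
          by_cases hw : 0 ≤ w
          · rw [if_pos, if_pos hw]
            · have h4 : 4*(x*(w + t^2/(4*x))) - t^2 = 4*x*w := by field_simp; ring
              rw [h4, show (4:ℝ)*x*w = (4*x)*w by ring,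
                Real.mul_rpow hx4.le hw,
                show -(a*x + c*(w + t^2/(4*x)) + b*t) =
                  (-(a*x + b*t + c*(t^2/(4*x)))) + (-(c*w)) by ring,
                Real.exp_add, show α - 1/2 - 1 = α - 3/2 by ring]
              ring
            · refine ⟨hx.le, by positivity, ?_⟩
              have h4 : 4*(x*(w + t^2/(4*x))) = 4*x*w + t^2 := by field_simp
              nlinarith
          · rw [if_neg, if_neg hw, mul_zero]
            rintro ⟨h1, h2, h3⟩
            have h4 : 4*(x*(w + t^2/(4*x))) = 4*x*w + t^2 := by field_simp
            apply hw
            nlinarith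
      _ = ENNReal.ofReal (Real.exp (-(a*x + b*t + c*(t^2/(4*x)))) * (4*x) ^ (α - 3/2)) *
          ENNReal.ofReal ((1/c) ^ (α - 1/2) * Real.Gamma (α - 1/2)) := by
          rw [lintegral_const_mul' _ _ ENNReal.ofReal_ne_top, L1if hs hc]
      _ = _ := by
          rw [← ENNReal.ofReal_mul (by positivity)]
  -- step 5 : t-integral for x > 0
  have step5 : ∀ x : ℝ, 0 < x → (∫⁻ t : ℝ, ∫⁻ y : ℝ, h x y t) =
      ENNReal.ofReal ((Real.exp (-(a*x)) * (4*x) ^ (α - 3/2) *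
        ((1/c) ^ (α - 1/2) * Real.Gamma (α - 1/2))) *
        (Real.sqrt (π / (c/(4*x))) * Real.exp ((-b) ^ 2 / (4 * (c/(4*x)))))) := by
    intro x hx
    have hp : 0 < c / (4*x) := by positivity
    calc (∫⁻ t : ℝ, ∫⁻ y : ℝ, h x y t)
        = ∫⁻ t : ℝ, ENNReal.ofReal (Real.exp (-(a*x)) * (4*x) ^ (α - 3/2) *
            ((1/c) ^ (α - 1/2) * Real.Gamma (α - 1/2))) *
          ENNReal.ofReal (Real.exp (-(c/(4*x) * t^2) + (-b) * t)) := by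
          refine lintegral_congr fun t => ?_
          rw [step4 x hx t, ← ENNReal.ofReal_mul (by positivity)]
          congr 1
          rw [show -(a*x + b*t + c*(t^2/(4*x))) = (-(a*x)) + (-(c/(4*x) * t^2) + (-b) * t) by
            field_simp; ring, Real.exp_add]
          ring
      _ = ENNReal.ofReal (Real.exp (-(a*x)) * (4*x) ^ (α - 3/2) *
            ((1/c) ^ (α - 1/2) * Real.Gamma (α - 1/2))) *
          ENNReal.ofReal (Real.sqrt (π / (c/(4*x))) * Real.exp ((-b) ^ 2 / (4 * (c/(4*x))))) := by
          rw [lintegral_const_mul' _ _ ENNReal.ofReal_ne_top, L2lin hp]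
      _ = _ := by rw [← ENNReal.ofReal_mul (by positivity)]
  -- assemble
  set K0 : ℝ := 4 ^ (α - 3/2) * (1/c) ^ (α - 1/2) * Real.Gamma (α - 1/2) *
    Real.sqrt (4 * π / c) with hK0
  have hK0pos : 0 < K0 := by
    rw [hK0]
    have : (0:ℝ) < 4 * π / c := by positivity
    positivity
  calc (∫⁻ x : ℝ, ∫⁻ y : ℝ, ∫⁻ z : ℝ, ENNReal.ofReal
      (if 0 ≤ x ∧ 0 ≤ y ∧ x^2 + y^2 + z^2 ≤ 2*(x*y + x*z + y*z) then
        Real.exp (-((a-b)*x + (c-b)*y + b*z)) *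
          (2*(x*y + x*z + y*z) - x^2 - y^2 - z^2) ^ (α - 3/2) else 0))
      = ∫⁻ x : ℝ, ∫⁻ y : ℝ, ∫⁻ t : ℝ, h x y t := by
        refine lintegral_congr fun x => lintegral_congr fun y => (step1 x y).symm
    _ = ∫⁻ x : ℝ, ∫⁻ t : ℝ, ∫⁻ y : ℝ, h x y t := by
        refine lintegral_congr fun x => ?_
        exact lintegral_lintegral_swap
          ((hmeas.comp (measurable_const.prodMk measurable_id)).aemeasurable)
    _ = ∫⁻ x : ℝ in Ioi 0, ∫⁻ t : ℝ, ∫⁻ y : ℝ, h x y t := by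
        rw [← lintegral_indicator measurableSet_Ioi]
        refine lintegral_congr_ae ?_
        filter_upwards [compl_mem_ae_iff.2 (volume_singleton (a := (0:ℝ)))] with x hx
        simp only [mem_compl_iff, mem_singleton_iff] at hx
        rcases lt_trichotomy x 0 with hneg | h0 | hpos
        · rw [indicator_of_notMem (by simpa using hneg.le)]
          have : ∀ t y : ℝ, h x y t = 0 := by
            intro t y
            simp only [hh]
            rw [if_neg, ENNReal.ofReal_zero]
            rintro ⟨h1, _, _⟩
            exact absurd h1 (not_le.2 hneg)
          simp [this]
        · exact absurd h0 hx
        · rw [indicator_of_mem (mem_Ioi.2 hpos)]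
    _ = ∫⁻ x : ℝ in Ioi 0, ENNReal.ofReal (K0 * (x ^ (α - 1) * Real.exp (-(d * x)))) := by
        refine setLIntegral_congr_fun measurableSet_Ioi
          (fun x hx => ?_)
        have hx : (0:ℝ) < x := hx
        rw [step5 x hx]
        congr 1
        have e1 : ((4:ℝ)*x) ^ (α - 3/2) = 4 ^ (α - 3/2) * x ^ (α - 3/2) :=
          Real.mul_rpow (by norm_num) hx.le
        have e2 : Real.sqrt (π / (c/(4*x))) = Real.sqrt (4 * π / c) * x ^ ((1:ℝ)/2) := by
          rw [show π / (c/(4*x)) = (4 * π / c) * x by field_simp,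
            Real.sqrt_mul (by positivity)]
          congr 1
          exact Real.sqrt_eq_rpow x
        have e3 : x ^ (α - 3/2) * x ^ ((1:ℝ)/2) = x ^ (α - 1) := by
          rw [← Real.rpow_add hx]
          congr 1
          ring
        have e4 : Real.exp (-(a*x)) * Real.exp ((-b) ^ 2 / (4 * (c/(4*x)))) =
            Real.exp (-(d * x)) := by
          rw [← Real.exp_add]
          congr 1
          rw [hd]
          field_simp
          ring
        rw [e1, e2, hK0, ← e3, ← e4]
        ring
    _ = ENNReal.ofReal K0 * ∫⁻ x : ℝ in Ioi 0, ENNReal.ofReal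
          (x ^ (α - 1) * Real.exp (-(d * x))) := by
        simp_rw [ENNReal.ofReal_mul hK0pos.le]
        rw [lintegral_const_mul' _ _ ENNReal.ofReal_ne_top]
    _ = ENNReal.ofReal K0 * ENNReal.ofReal ((1/d) ^ α * Real.Gamma α) := by
        rw [L1set (by linarith : (0:ℝ) < α) hdpos]
    _ = ENNReal.ofReal (K0 * ((1/d) ^ α * Real.Gamma α)) := by
        rw [← ENNReal.ofReal_mul hK0pos.le]
    _ = _ := by
        rw [hK0, hd]
        exact congrArg ENNReal.ofReal (finalarith hα hc hE)

end key

end Stmt4Aux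

open Stmt4Aux Real Set in
/-- The Riesz kernel of `E₂(θ) = θ₁θ₂+θ₁θ₃+θ₂θ₃` in three variables: for `α > 1/2` and
`θ` in the hyperbolicity cone of `E₂` containing `(1,1,1)`,
`E₂(θ)^{-α} = (2^{2-2α}/Γ₂(α)) ∫_K exp(-⟨θ,σ⟩)(2(σ₁σ₂+σ₁σ₃+σ₂σ₃)-σ₁²-σ₂²-σ₃²)^{α-3/2} dσ`,
where `K = {σ : σ₁ ≥ 0, σ₂ ≥ 0, 2(σ₁σ₂+σ₁σ₃+σ₂σ₃) ≥ σ₁²+σ₂²+σ₃²}` and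
`Γ₂(α) = π^{1/2} Γ(α) Γ(α-1/2)`. -/
theorem stmt4 (α : ℝ) (hα : 1 / 2 < α) (θ₁ θ₂ θ₃ : ℝ)
    (h13 : 0 < θ₁ + θ₃) (h23 : 0 < θ₂ + θ₃)
    (hE2 : 0 < θ₁ * θ₂ + θ₁ * θ₃ + θ₂ * θ₃) :
    (θ₁ * θ₂ + θ₁ * θ₃ + θ₂ * θ₃) ^ (-α) =
      (2 : ℝ) ^ (2 - 2 * α) / (Real.pi ^ (1 / 2 : ℝ) * Real.Gamma α * Real.Gamma (α - 1 / 2)) *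
        ∫ σ in {σ : Fin 3 → ℝ | 0 ≤ σ 0 ∧ 0 ≤ σ 1 ∧
            σ 0 ^ 2 + σ 1 ^ 2 + σ 2 ^ 2 ≤ 2 * (σ 0 * σ 1 + σ 0 * σ 2 + σ 1 * σ 2)},
          Real.exp (-(θ₁ * σ 0 + θ₂ * σ 1 + θ₃ * σ 2)) *
            (2 * (σ 0 * σ 1 + σ 0 * σ 2 + σ 1 * σ 2) -
              σ 0 ^ 2 - σ 1 ^ 2 - σ 2 ^ 2) ^ (α - 3 / 2) := by
  have hs : 0 < α - 1/2 := by linarith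
  have hΓ1 : 0 < Real.Gamma α := Real.Gamma_pos_of_pos (by linarith)
  have hΓ2 : 0 < Real.Gamma (α - 1/2) := Real.Gamma_pos_of_pos hs
  have hπ : (0:ℝ) < π := Real.pi_pos
  set K : Set (Fin 3 → ℝ) := {σ : Fin 3 → ℝ | 0 ≤ σ 0 ∧ 0 ≤ σ 1 ∧
      σ 0 ^ 2 + σ 1 ^ 2 + σ 2 ^ 2 ≤ 2 * (σ 0 * σ 1 + σ 0 * σ 2 + σ 1 * σ 2)} with hK
  set f : (Fin 3 → ℝ) → ℝ := fun σ =>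
    Real.exp (-(θ₁ * σ 0 + θ₂ * σ 1 + θ₃ * σ 2)) *
      (2 * (σ 0 * σ 1 + σ 0 * σ 2 + σ 1 * σ 2) -
        σ 0 ^ 2 - σ 1 ^ 2 - σ 2 ^ 2) ^ (α - 3 / 2) with hf
  have hKmeas : MeasurableSet K := by
    rw [hK, Set.setOf_and, Set.setOf_and]
    refine MeasurableSet.inter ?_ (MeasurableSet.inter ?_ ?_)
    · exact measurableSet_le measurable_const (measurable_pi_apply 0)
    · exact measurableSet_le measurable_const (measurable_pi_apply 1)
    · have m0 : Measurable fun σ : Fin 3 → ℝ => σ 0 := measurable_pi_apply 0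
      have m1 : Measurable fun σ : Fin 3 → ℝ => σ 1 := measurable_pi_apply 1
      have m2 : Measurable fun σ : Fin 3 → ℝ => σ 2 := measurable_pi_apply 2
      exact measurableSet_le (((m0.pow_const 2).add (m1.pow_const 2)).add (m2.pow_const 2))
        (measurable_const.mul (((m0.mul m1).add (m0.mul m2)).add (m1.mul m2)))
  have hfm : Measurable f := by
    rw [hf]
    have m0 : Measurable fun σ : Fin 3 → ℝ => σ 0 := measurable_pi_apply 0
    have m1 : Measurable fun σ : Fin 3 → ℝ => σ 1 := measurable_pi_apply 1
    have m2 : Measurable fun σ : Fin 3 → ℝ => σ 2 := measurable_pi_apply 2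
    refine Measurable.mul ?_ ?_
    · exact (((measurable_const.mul m0).add
        (measurable_const.mul m1)).add
        (measurable_const.mul m2)).neg.exp
    · exact ((((measurable_const.mul (((m0.mul m1).add (m0.mul m2)).add (m1.mul m2))).sub
        (m0.pow_const 2)).sub (m1.pow_const 2)).sub (m2.pow_const 2)).pow measurable_const
  -- step M1 : Bochner to lower integral
  have M1 : (∫ σ in K, f σ) = (∫⁻ σ in K, ENNReal.ofReal (f σ)).toReal := by
    rw [integral_eq_lintegral_of_nonneg_ae]
    · refine (ae_restrict_iff' hKmeas).2 (Filter.Eventually.of_forall fun σ hσ => ?_)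
      obtain ⟨h1, h2, h3⟩ := hσ
      have : (0:ℝ) ≤ 2 * (σ 0 * σ 1 + σ 0 * σ 2 + σ 1 * σ 2) -
          σ 0 ^ 2 - σ 1 ^ 2 - σ 2 ^ 2 := by linarith
      exact mul_nonneg (Real.exp_pos _).le (Real.rpow_nonneg this _)
    · exact hfm.aestronglyMeasurable
  -- step M2 : to an if-integrand over the whole space
  have M2 : (∫⁻ σ in K, ENNReal.ofReal (f σ)) =
      ∫⁻ σ : Fin 3 → ℝ, ENNReal.ofReal
        (if 0 ≤ σ 0 ∧ 0 ≤ σ 1 ∧ (σ 0)^2 + (σ 1)^2 + (σ 2)^2 ≤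
            2*((σ 0)*(σ 1) + (σ 0)*(σ 2) + (σ 1)*(σ 2)) then
          Real.exp (-(((θ₁+θ₃)-θ₃) * σ 0 + ((θ₂+θ₃)-θ₃) * σ 1 + θ₃ * σ 2)) *
            (2*((σ 0)*(σ 1) + (σ 0)*(σ 2) + (σ 1)*(σ 2)) -
              (σ 0)^2 - (σ 1)^2 - (σ 2)^2) ^ (α - 3/2) else 0) := by
    rw [← lintegral_indicator hKmeas]
    refine lintegral_congr fun σ => ?_
    by_cases hσ : σ ∈ K
    · rw [indicator_of_mem hσ, if_pos]
      · simp only [hf]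
        congr 3
        ring
      · exact hσ
    · rw [indicator_of_notMem hσ, if_neg]
      · simp
      · exact hσ
  -- step M3 : peel coordinates and apply keylint
  have hEab : 0 < (θ₁+θ₃) * (θ₂+θ₃) - θ₃ ^ 2 := by nlinarith
  have M3 : (∫⁻ σ : Fin 3 → ℝ, ENNReal.ofReal
        (if 0 ≤ σ 0 ∧ 0 ≤ σ 1 ∧ (σ 0)^2 + (σ 1)^2 + (σ 2)^2 ≤
            2*((σ 0)*(σ 1) + (σ 0)*(σ 2) + (σ 1)*(σ 2)) then
          Real.exp (-(((θ₁+θ₃)-θ₃) * σ 0 + ((θ₂+θ₃)-θ₃) * σ 1 + θ₃ * σ 2)) *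
            (2*((σ 0)*(σ 1) + (σ 0)*(σ 2) + (σ 1)*(σ 2)) -
              (σ 0)^2 - (σ 1)^2 - (σ 2)^2) ^ (α - 3/2) else 0)) =
      ENNReal.ofReal (2 ^ (2*α - 2) * π ^ ((1:ℝ)/2) * Real.Gamma α * Real.Gamma (α - 1/2) *
        ((θ₁+θ₃) * (θ₂+θ₃) - θ₃ ^ 2) ^ (-α)) := by
    rw [lintegral_fin3 (fun x y z => ENNReal.ofReal
      (if 0 ≤ x ∧ 0 ≤ y ∧ x^2 + y^2 + z^2 ≤ 2*(x*y + x*z + y*z) then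
        Real.exp (-(((θ₁+θ₃)-θ₃)*x + ((θ₂+θ₃)-θ₃)*y + θ₃*z)) *
          (2*(x*y + x*z + y*z) - x^2 - y^2 - z^2) ^ (α - 3/2) else 0)) ?_]
    · exact keylint hα h13 h23 hEab
    · have ms0 : Measurable fun p : ℝ × ℝ × ℝ => p.1 := measurable_fst
      have ms1 : Measurable fun p : ℝ × ℝ × ℝ => p.2.1 := measurable_fst.comp measurable_snd
      have ms2 : Measurable fun p : ℝ × ℝ × ℝ => p.2.2 := measurable_snd.comp measurable_snd
      apply ENNReal.measurable_ofReal.comp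
      apply Measurable.ite
      · rw [Set.setOf_and, Set.setOf_and]
        refine MeasurableSet.inter ?_ (MeasurableSet.inter ?_ ?_)
        · exact measurableSet_le measurable_const ms0
        · exact measurableSet_le measurable_const ms1
        · exact measurableSet_le (((ms0.pow_const 2).add (ms1.pow_const 2)).add (ms2.pow_const 2))
            (measurable_const.mul (((ms0.mul ms1).add (ms0.mul ms2)).add (ms1.mul ms2)))
      · refine Measurable.mul ?_ ?_
        · exact (((measurable_const.mul ms0).add (measurable_const.mul ms1)).add
            (measurable_const.mul ms2)).neg.exp
        · exact ((((measurable_const.mul (((ms0.mul ms1).add (ms0.mul ms2)).add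
            (ms1.mul ms2))).sub (ms0.pow_const 2)).sub (ms1.pow_const 2)).sub
            (ms2.pow_const 2)).pow measurable_const
      · exact measurable_const
  -- put everything together
  have hEeq : (θ₁+θ₃) * (θ₂+θ₃) - θ₃ ^ 2 = θ₁ * θ₂ + θ₁ * θ₃ + θ₂ * θ₃ := by ring
  have hval : (0:ℝ) ≤ 2 ^ (2*α - 2) * π ^ ((1:ℝ)/2) * Real.Gamma α * Real.Gamma (α - 1/2) *
      ((θ₁+θ₃) * (θ₂+θ₃) - θ₃ ^ 2) ^ (-α) := by positivity
  rw [show (∫ σ in {σ : Fin 3 → ℝ | 0 ≤ σ 0 ∧ 0 ≤ σ 1 ∧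
        σ 0 ^ 2 + σ 1 ^ 2 + σ 2 ^ 2 ≤ 2 * (σ 0 * σ 1 + σ 0 * σ 2 + σ 1 * σ 2)},
      Real.exp (-(θ₁ * σ 0 + θ₂ * σ 1 + θ₃ * σ 2)) *
        (2 * (σ 0 * σ 1 + σ 0 * σ 2 + σ 1 * σ 2) -
          σ 0 ^ 2 - σ 1 ^ 2 - σ 2 ^ 2) ^ (α - 3 / 2)) = ∫ σ in K, f σ from rfl]
  rw [M1, M2, M3, ENNReal.toReal_ofReal hval, hEeq]
  have h2 : (2:ℝ) ^ (2 - 2*α) * 2 ^ (2*α - 2) = 1 := by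
    rw [← Real.rpow_add (by norm_num)]
    norm_num
  have hD : Real.pi ^ ((1:ℝ)/2) * Real.Gamma α * Real.Gamma (α - 1/2) ≠ 0 := by positivity
  rw [div_mul_eq_mul_div, eq_div_iff hD]
  linear_combination -(π ^ ((1:ℝ)/2) * Real.Gamma α * Real.Gamma (α - 1/2) *
    (θ₁ * θ₂ + θ₁ * θ₃ + θ₂ * θ₃) ^ (-α)) * h2
end

section
/- Let K ⊆ ℝ^d be a nonempty closed convex cone, let K^∨ = {θ ∈ ℝ^d : ⟨θ,σ⟩ ≥ 0 for all σ ∈ K} be its dual cone, and let 𝓛 ⊆ ℝ^d be a linear subspace such that 𝓛 intersects the interior of K^∨. Let π be the orthogonal projection of ℝ^d onto 𝓛. Then π(K) = {σ ∈ 𝓛 : ⟨θ,σ⟩ ≥ 0 for all θ ∈ K^∨ ∩ 𝓛}; that is, the image of K under π equals the dual cone, computed inside the subspace 𝓛 with its induced inner product, of the cone K^∨ ∩ 𝓛. In particular π(K) is closed. -/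
open scoped RealInnerProductSpace

/-- Let `K ⊆ ℝ^d` be a nonempty closed convex cone with dual cone
`K^∨ = {θ : ⟨θ,σ⟩ ≥ 0 ∀ σ ∈ K}`, and let `𝓛` be a linear subspace meeting the interior
of `K^∨`. Then the image of `K` under the orthogonal projection `π` onto `𝓛` equals the
dual cone, computed inside `𝓛`, of `K^∨ ∩ 𝓛`; in particular `π(K)` is closed. -/
theorem stmt6 {d : ℕ} (K : Set (EuclideanSpace ℝ (Fin d)))
    (hKne : K.Nonempty) (hKclosed : IsClosed K) (hKconv : Convex ℝ K)
    (hKcone : ∀ σ ∈ K, ∀ t : ℝ, 0 < t → t • σ ∈ K)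
    (Kdual : Set (EuclideanSpace ℝ (Fin d)))
    (hKdual : Kdual = {θ | ∀ σ ∈ K, 0 ≤ ⟪θ, σ⟫})
    (𝓛 : Submodule ℝ (EuclideanSpace ℝ (Fin d)))
    (h𝓛 : ((𝓛 : Set (EuclideanSpace ℝ (Fin d))) ∩ interior Kdual).Nonempty) :
    (fun x => Submodule.orthogonalProjectionOnto 𝓛 x) '' K =
      {σ : 𝓛 | ∀ θ : 𝓛, (θ : EuclideanSpace ℝ (Fin d)) ∈ Kdual → 0 ≤ ⟪θ, σ⟫} ∧
    IsClosed ((fun x => Submodule.orthogonalProjectionOnto 𝓛 x) '' K) := by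
  set S : Set 𝓛 := (fun x => Submodule.orthogonalProjectionOnto 𝓛 x) '' K with hS
  obtain ⟨θ₀, hθ𝓛, hθint⟩ := h𝓛
  obtain ⟨ε, hε, hball⟩ := Metric.isOpen_iff.1 isOpen_interior θ₀ hθint
  have hball' : Metric.ball θ₀ ε ⊆ Kdual := hball.trans interior_subset
  -- key lower bound:  (ε/2) * ‖σ‖ ≤ ⟪θ₀, σ⟫  for σ ∈ K
  have hlow : ∀ σ ∈ K, ε / 2 * ‖σ‖ ≤ ⟪θ₀, σ⟫ := by
    intro σ hσ
    rcases eq_or_ne σ 0 with rfl | hσ0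
    · simp
    · have hσn : (0:ℝ) < ‖σ‖ := norm_pos_iff.2 hσ0
      have hmem : θ₀ - (ε / 2 / ‖σ‖) • σ ∈ Kdual := by
        apply hball'
        rw [Metric.mem_ball, dist_eq_norm]
        have h : θ₀ - (ε / 2 / ‖σ‖) • σ - θ₀ = -((ε / 2 / ‖σ‖) • σ) := by abel
        rw [h, norm_neg, norm_smul, Real.norm_eq_abs,
          abs_of_nonneg (by positivity : (0:ℝ) ≤ ε / 2 / ‖σ‖),
          div_mul_cancel₀ _ (ne_of_gt hσn)]
        linarith
      rw [hKdual] at hmem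
      have h0 := hmem σ hσ
      rw [inner_sub_left, real_inner_smul_left, real_inner_self_eq_norm_sq] at h0
      have hval : ε / 2 / ‖σ‖ * (‖σ‖ * ‖σ‖) = ε / 2 * ‖σ‖ := by
        field_simp
      rw [sq, hval] at h0
      linarith
  -- closedness of S
  have hSclosed : IsClosed S := by
    apply IsSeqClosed.isClosed
    intro u y hu huy
    choose σ hσK hσπ using hu
    have hcont : Filter.Tendsto (fun n => ⟪θ₀, ((u n : 𝓛) : EuclideanSpace ℝ (Fin d))⟫)
        Filter.atTop (nhds ⟪θ₀, ((y : 𝓛) : EuclideanSpace ℝ (Fin d))⟫) :=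
      Filter.Tendsto.inner tendsto_const_nhds ((continuous_subtype_val.tendsto _).comp huy)
    obtain ⟨M, hM⟩ := hcont.bddAbove_range
    have hbdd : ∀ n, σ n ∈ Metric.closedBall (0 : EuclideanSpace ℝ (Fin d)) (2 / ε * M) := by
      intro n
      have h1 : ε / 2 * ‖σ n‖ ≤ ⟪θ₀, σ n⟫ := hlow _ (hσK n)
      have h2 : ⟪θ₀, σ n⟫ = ⟪θ₀, ((u n : 𝓛) : EuclideanSpace ℝ (Fin d))⟫ := by
        rw [← hσπ n]
        have h := Submodule.inner_orthogonalProjectionOnto_eq_of_mem_left (K := 𝓛) ⟨θ₀, hθ𝓛⟩ (σ n)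
        rw [Submodule.coe_inner] at h
        exact h.symm
      have h3 : ⟪θ₀, ((u n : 𝓛) : EuclideanSpace ℝ (Fin d))⟫ ≤ M := hM ⟨n, rfl⟩
      rw [Metric.mem_closedBall, dist_zero_right]
      have h4 : ε / 2 * ‖σ n‖ ≤ M := by rw [← h2] at h3; linarith
      rw [div_mul_eq_mul_div, mul_comm, le_div_iff₀ hε]
      nlinarith
    obtain ⟨a, -, φ, hφ, ha⟩ := tendsto_subseq_of_bounded Metric.isBounded_closedBall hbdd
    have haK : a ∈ K := hKclosed.mem_of_tendsto ha
      (Filter.Eventually.of_forall fun n => hσK (φ n))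
    refine ⟨a, haK, ?_⟩
    have h1 : Filter.Tendsto (fun n => Submodule.orthogonalProjectionOnto 𝓛 (σ (φ n))) Filter.atTop
        (nhds (Submodule.orthogonalProjectionOnto 𝓛 a)) :=
      ((Submodule.orthogonalProjectionOnto 𝓛).continuous.tendsto a).comp ha
    have h2 : Filter.Tendsto (fun n => Submodule.orthogonalProjectionOnto 𝓛 (σ (φ n))) Filter.atTop
        (nhds y) := by
      simp only [hσπ]
      exact huy.comp hφ.tendsto_atTop
    exact tendsto_nhds_unique h1 h2
  -- K is closed under addition
  have hKadd : ∀ σ ∈ K, ∀ τ ∈ K, σ + τ ∈ K := by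
    intro σ hσ τ hτ
    have hmid : ((1:ℝ)/2) • σ + ((1:ℝ)/2) • τ ∈ K :=
      hKconv hσ hτ (by norm_num) (by norm_num) (by norm_num)
    have h := hKcone _ hmid 2 (by norm_num)
    simpa [smul_add, smul_smul] using h
  have hSne : S.Nonempty := hKne.image _
  let C : ConvexCone ℝ 𝓛 :=
    { carrier := S
      smul_mem' := by
        rintro c hc x ⟨σ, hσ, rfl⟩
        exact ⟨c • σ, hKcone σ hσ c hc, by simp [map_smul]⟩
      add_mem' := by
        rintro x ⟨σ, hσ, rfl⟩ y ⟨τ, hτ, rfl⟩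
        exact ⟨σ + τ, hKadd σ hσ τ hτ, by simp [map_add]⟩ }
  have heq : S = {σ : 𝓛 | ∀ θ : 𝓛,
      (θ : EuclideanSpace ℝ (Fin d)) ∈ Kdual → 0 ≤ ⟪θ, σ⟫} := by
    apply Set.Subset.antisymm
    · rintro _ ⟨σ, hσ, rfl⟩ θ hθ
      have h := Submodule.inner_orthogonalProjectionOnto_eq_of_mem_left (K := 𝓛) θ σ
      rw [h]
      rw [hKdual] at hθ
      exact hθ σ hσ
    · intro s hs
      by_contra hsn
      have h0S : (0 : 𝓛) ∈ S := by
        obtain ⟨σ, hσ⟩ := hKne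
        have ht : Filter.Tendsto (fun n : ℕ => (1 / ((n : ℝ) + 1)) • σ) Filter.atTop
            (nhds 0) := by
          have := (tendsto_one_div_add_atTop_nhds_zero_nat : Filter.Tendsto
            (fun n : ℕ => 1 / ((n : ℝ) + 1)) Filter.atTop (nhds 0)).smul_const σ
          rwa [zero_smul] at this
        have h0K : (0 : EuclideanSpace ℝ (Fin d)) ∈ K := hKclosed.mem_of_tendsto ht
          (Filter.Eventually.of_forall fun n => hKcone σ hσ _ (by positivity))
        exact ⟨0, h0K, map_zero _⟩
      let P : ProperCone ℝ 𝓛 :=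
        ⟨{ carrier := S
           add_mem' := fun {x y} hx hy => C.add_mem' hx hy
           zero_mem' := h0S
           smul_mem' := by
             intro c x hx
             rcases eq_or_lt_of_le c.2 with hc | hc
             · rw [show c = 0 from Subtype.ext hc.symm, zero_smul]; exact h0S
             · have := C.smul_mem' (c := (c : ℝ)) hc hx
               exact this }, hSclosed⟩
      obtain ⟨y, hy1, hy2⟩ := P.hyperplane_separation' (x₀ := s) hsn
      have hyK : (y : EuclideanSpace ℝ (Fin d)) ∈ Kdual := by
        rw [hKdual]
        intro σ hσ
        have h1 : 0 ≤ ⟪(Submodule.orthogonalProjectionOnto 𝓛 σ : 𝓛), y⟫ := hy1 _ ⟨σ, hσ, rfl⟩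
        rw [real_inner_comm] at h1
        have h := Submodule.inner_orthogonalProjectionOnto_eq_of_mem_left (K := 𝓛) y σ
        rwa [h] at h1
      exact absurd (hs y hyK) (not_le.2 (by rw [real_inner_comm]; exact hy2))
  exact ⟨heq, hSclosed⟩
end

section
/- Let d ≥ 1 and 1 ≤ m ≤ d, and let e_m denote the elementary symmetric polynomial of degree m in the variables θ₁,…,θ_d. If θ ∈ ℂ^d has all coordinates nonzero (θ_i ≠ 0 for every i), then at least one partial derivative of e_m is nonzero at θ; that is, the system of equations (∂e_m/∂θ_1)(θ) = ⋯ = (∂e_m/∂θ_d)(θ) = 0 has no solution with all coordinates nonzero. -/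
set_option linter.unnecessarySimpa false

open MvPolynomial Finset

private lemma pderiv_prod_X {d : ℕ} (i : Fin d) (s : Finset (Fin d)) :
    MvPolynomial.pderiv i (∏ j ∈ s, (MvPolynomial.X j : MvPolynomial (Fin d) ℂ)) =
      if i ∈ s then ∏ j ∈ s.erase i, MvPolynomial.X j else 0 := by
  induction s using Finset.induction_on with
  | empty => simp
  | @insert a s ha ih =>
    rw [Finset.prod_insert ha, pderiv_mul, ih]
    by_cases hia : i = a
    · subst hia
      simp [ha, Finset.erase_insert ha, pderiv_X_self]
    · rw [pderiv_X_of_ne (Ne.symm hia)]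
      by_cases his : i ∈ s
      · simp [his, hia, Finset.mem_insert,
          Finset.erase_insert_of_ne (fun h => hia h.symm) ,
          Finset.prod_insert (by simp [Finset.mem_erase, ha] : a ∉ s.erase i)]
      · simp [his, hia, Finset.mem_insert]

private lemma pderiv_esymm {d : ℕ} (i : Fin d) (m : ℕ) :
    MvPolynomial.pderiv i (MvPolynomial.esymm (Fin d) ℂ m) =
      ∑ s ∈ (Finset.powersetCard m Finset.univ).filter (i ∈ ·),
        ∏ j ∈ s.erase i, MvPolynomial.X j := by
  rw [MvPolynomial.esymm, map_sum]
  rw [Finset.sum_filter]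
  exact Finset.sum_congr rfl fun s _ => pderiv_prod_X i s

/-- recurrence: `e_m = ∂ᵢ e_{m+1} + Xᵢ * ∂ᵢ e_m`. -/
private lemma esymm_rec {d : ℕ} (i : Fin d) (m : ℕ) :
    MvPolynomial.esymm (Fin d) ℂ m =
      MvPolynomial.pderiv i (MvPolynomial.esymm (Fin d) ℂ (m + 1)) +
        MvPolynomial.X i * MvPolynomial.pderiv i (MvPolynomial.esymm (Fin d) ℂ m) := by
  rw [pderiv_esymm, pderiv_esymm, MvPolynomial.esymm]
  rw [← Finset.sum_filter_add_sum_filter_not (Finset.powersetCard m Finset.univ) (i ∈ ·)]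
  rw [add_comm, Finset.mul_sum]
  congr 1
  · -- sum over `i ∉ t` equals sum over `|s| = m+1`, `i ∈ s`
    refine Finset.sum_nbij' (fun t => insert i t) (fun s => s.erase i) ?_ ?_ ?_ ?_ ?_
    · intro t ht
      simp only [Finset.mem_filter, Finset.mem_powersetCard_univ] at ht ⊢
      exact ⟨by rw [Finset.card_insert_of_notMem ht.2, ht.1], Finset.mem_insert_self i t⟩
    · intro s hs
      simp only [Finset.mem_filter, Finset.mem_powersetCard_univ] at hs ⊢
      refine ⟨?_, Finset.notMem_erase i s⟩
      rw [Finset.card_erase_of_mem hs.2, hs.1]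
      omega
    · intro t ht
      simp only [Finset.mem_filter] at ht
      exact Finset.erase_insert ht.2
    · intro s hs
      simp only [Finset.mem_filter] at hs
      exact Finset.insert_erase hs.2
    · intro t ht
      simp only [Finset.mem_filter] at ht
      rw [Finset.erase_insert ht.2]
  · exact Finset.sum_congr rfl fun s hs => by
      rw [Finset.mul_prod_erase s _ (Finset.mem_filter.mp hs).2]

/-- Euler's identity for `e_m`. -/
private lemma esymm_euler {d : ℕ} (m : ℕ) :
    ∑ i, MvPolynomial.X i * MvPolynomial.pderiv i (MvPolynomial.esymm (Fin d) ℂ m) =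
      (m : MvPolynomial (Fin d) ℂ) * MvPolynomial.esymm (Fin d) ℂ m := by
  have h : ∀ i : Fin d,
      MvPolynomial.X i * MvPolynomial.pderiv i (MvPolynomial.esymm (Fin d) ℂ m) =
        ∑ s ∈ Finset.powersetCard m Finset.univ,
          if i ∈ s then ∏ j ∈ s, (MvPolynomial.X j : MvPolynomial (Fin d) ℂ) else 0 := by
    intro i
    rw [pderiv_esymm, Finset.mul_sum, Finset.sum_filter]
    refine Finset.sum_congr rfl fun s _ => ?_
    by_cases his : i ∈ s
    · simp only [his, if_true]
      exact Finset.mul_prod_erase s _ his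
    · simp [his]
  simp_rw [h]
  rw [Finset.sum_comm, MvPolynomial.esymm, Finset.mul_sum]
  refine Finset.sum_congr rfl fun s hs => ?_
  rw [Finset.sum_ite_mem, Finset.univ_inter, Finset.sum_const,
    Finset.mem_powersetCard_univ.mp hs, nsmul_eq_mul]

/-- The partial derivatives of the elementary symmetric polynomial `e_m` in `d` variables
(`1 ≤ m ≤ d`) have no common zero with all coordinates nonzero: if every `θ i ≠ 0`, then
some partial derivative of `e_m` is nonzero at `θ`. -/
theorem stmt10 {d m : ℕ} (hd : 1 ≤ d) (hm1 : 1 ≤ m) (hmd : m ≤ d)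
    (θ : Fin d → ℂ) (hθ : ∀ i, θ i ≠ 0) :
    ∃ i, MvPolynomial.eval θ
      (MvPolynomial.pderiv i (MvPolynomial.esymm (Fin d) ℂ m)) ≠ 0 := by
  induction m with
  | zero => omega
  | succ k ih =>
    rcases Nat.eq_zero_or_pos k with hk | hk
    · -- m = 1 : derivatives are 1
      subst hk
      refine ⟨⟨0, hd⟩, ?_⟩
      have h1 : MvPolynomial.pderiv (⟨0, hd⟩ : Fin d)
          (MvPolynomial.esymm (Fin d) ℂ 1) = 1 := by
        have h := esymm_rec (⟨0, hd⟩ : Fin d) 0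
        simpa using h.symm

      simp [h1]
    · -- inductive step
      by_contra hcon
      push_neg at hcon
      have hik := ih hk (le_trans (Nat.le_succ k) hmd)
      -- from the recurrence: e_k(θ) = θ i * ∂ᵢ e_k (θ)
      have key : ∀ i : Fin d, MvPolynomial.eval θ (MvPolynomial.esymm (Fin d) ℂ k) =
          θ i * MvPolynomial.eval θ (MvPolynomial.pderiv i (MvPolynomial.esymm (Fin d) ℂ k)) := by
        intro i
        have := congrArg (MvPolynomial.eval θ) (esymm_rec i k)
        rw [map_add, map_mul, hcon i, zero_add, MvPolynomial.eval_X] at this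
        exact this
      -- Euler: k * e_k(θ) = ∑ θ i * ∂ᵢ e_k(θ) = d * e_k(θ)
      have euler := congrArg (MvPolynomial.eval θ) (esymm_euler (d := d) k)
      rw [map_sum, map_mul] at euler
      simp only [map_mul, map_natCast, MvPolynomial.eval_X] at euler
      rw [Finset.sum_congr rfl (fun i _ => (key i).symm), Finset.sum_const,
        Finset.card_univ, Fintype.card_fin, nsmul_eq_mul] at euler
      have hek : MvPolynomial.eval θ (MvPolynomial.esymm (Fin d) ℂ k) = 0 := by
        have hkd : (d : ℂ) ≠ (k : ℂ) := by
          intro h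
          have := Nat.cast_injective (R := ℂ) h
          omega
        have : ((d : ℂ) - k) * MvPolynomial.eval θ (MvPolynomial.esymm (Fin d) ℂ k) = 0 := by
          rw [sub_mul, euler, sub_self]
        rcases mul_eq_zero.mp this with h | h
        · exact absurd (sub_eq_zero.mp h) hkd
        · exact h
      obtain ⟨i, hi⟩ := hik
      exact hi (by
        have := key i
        rw [hek] at this
        exact (mul_eq_zero.mp this.symm).resolve_left (hθ i))
end

section
/- Let 2 ≤ m ≤ d and let e_m denote the elementary symmetric polynomial of degree m in the variables θ₁,…,θ_d. For θ ∈ ℂ^d, all partial derivatives of e_m vanish at θ (i.e. (∂e_m/∂θ_i)(θ) = 0 for all i = 1,…,d) if and only if θ has at most m−2 nonzero coordinates. Consequently, the common zero locus in ℂ^d of the d partial derivatives of e_m is the union of the binom(d, m−2) coordinate subspaces spanned by m−2 of the standard basis vectors. -/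
open Finset MvPolynomial

variable {σ : Type*} [DecidableEq σ]

/-- truncated elementary symmetric function. -/
noncomputable def Eaux (θ : σ → ℂ) (r : ℕ) (A : Finset σ) : ℂ :=
  ∑ s ∈ A.powersetCard r, ∏ j ∈ s, θ j

lemma Eaux_zero (θ : σ → ℂ) (A : Finset σ) : Eaux θ 0 A = 1 := by
  simp [Eaux]

lemma Eaux_split (θ : σ → ℂ) (r : ℕ) {A : Finset σ} {i : σ} (hi : i ∈ A) :
    Eaux θ (r + 1) A = Eaux θ (r + 1) (A.erase i) + θ i * Eaux θ r (A.erase i) := by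
  have h2 : i ∉ A.erase i := notMem_erase _ _
  have h1 : A.powersetCard (r + 1)
      = powersetCard (r + 1) (A.erase i) ∪ (powersetCard r (A.erase i)).image (insert i) := by
    conv_lhs => rw [← insert_erase hi]
    exact powersetCard_succ_insert h2 r
  have hinj : ∀ x ∈ powersetCard r (A.erase i), ∀ y ∈ powersetCard r (A.erase i),
      insert i x = insert i y → x = y := by
    intro s hs t ht hst
    have hs' : i ∉ s := fun h => h2 ((mem_powersetCard.mp hs).1 h)
    have ht' : i ∉ t := fun h => h2 ((mem_powersetCard.mp ht).1 h)
    rw [← erase_insert hs', ← erase_insert ht', hst]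
  rw [Eaux, h1, sum_union]
  · congr 1
    rw [sum_image hinj, Eaux, mul_sum]
    refine sum_congr rfl fun s hs => ?_
    have his : i ∉ s := fun h => h2 ((mem_powersetCard.mp hs).1 h)
    rw [prod_insert his]
  · rw [disjoint_left]
    intro s hs hs'
    have hs1 : i ∉ s := fun h => h2 ((mem_powersetCard.mp hs).1 h)
    obtain ⟨t, _, rfl⟩ := mem_image.mp hs'
    exact hs1 (mem_insert_self _ _)

lemma Eaux_sum (θ : σ → ℂ) (r : ℕ) (A : Finset σ) :
    ∑ i ∈ A, Eaux θ r (A.erase i) = ((A.card - r : ℕ) : ℂ) * Eaux θ r A := by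
  have key : ∀ i ∈ A, Eaux θ r (A.erase i)
      = ∑ s ∈ A.powersetCard r, if i ∉ s then ∏ j ∈ s, θ j else 0 := by
    intro i _
    rw [Eaux, ← sum_filter]
    congr 1
    ext s
    simp [mem_powersetCard, subset_erase, and_assoc, and_comm, and_left_comm]
  rw [sum_congr rfl key, sum_comm, Eaux, mul_sum]
  refine sum_congr rfl fun s hs => ?_
  obtain ⟨hsA, hsc⟩ := mem_powersetCard.mp hs
  rw [sum_ite, sum_const_zero, add_zero, sum_const, ← sdiff_eq_filter, card_sdiff_of_subset hsA, hsc,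
    nsmul_eq_mul]

lemma Eaux_filter (θ : σ → ℂ) (r : ℕ) (A : Finset σ) :
    Eaux θ r A = Eaux θ r (A.filter (fun j => θ j ≠ 0)) := by
  refine (sum_subset (powersetCard_mono (filter_subset _ _)) fun s hs hs' => ?_).symm
  obtain ⟨hsA, hsc⟩ := mem_powersetCard.mp hs
  have : ∃ j ∈ s, θ j = 0 := by
    by_contra h
    push_neg at h
    exact hs' (mem_powersetCard.mpr ⟨fun x hx => mem_filter.mpr ⟨hsA hx, h x hx⟩, hsc⟩)
  obtain ⟨j, hj, hj0⟩ := this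
  exact prod_eq_zero hj hj0
lemma Eaux_key (θ : σ → ℂ) :
    ∀ (m : ℕ) (A : Finset σ), m + 1 ≤ A.card → (∀ j ∈ A, θ j ≠ 0) →
      ∃ i ∈ A, Eaux θ m (A.erase i) ≠ 0 := by
  intro m
  induction m with
  | zero =>
    intro A hA _
    obtain ⟨i, hi⟩ := card_pos.mp (Nat.lt_of_lt_of_le Nat.zero_lt_one hA)
    exact ⟨i, hi, by rw [Eaux_zero]; exact one_ne_zero⟩
  | succ m ih =>
    intro A hA hnz
    by_contra h
    push_neg at h
    have hEA : Eaux θ (m + 1) A = 0 := by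
      have hs := Eaux_sum θ (m + 1) A
      rw [sum_congr rfl h, sum_const_zero] at hs
      have hc : ((A.card - (m + 1) : ℕ) : ℂ) ≠ 0 :=
        Nat.cast_ne_zero.mpr (by omega)
      exact ((mul_eq_zero.mp hs.symm).resolve_left hc)
    have h2 : ∀ i ∈ A, Eaux θ m (A.erase i) = 0 := by
      intro i hi
      have := Eaux_split θ m hi
      rw [hEA, h i hi, zero_add] at this
      exact (mul_eq_zero.mp this.symm).resolve_left (hnz i hi)
    obtain ⟨i, hi, hne⟩ := ih A (by omega) hnz
    exact hne (h2 i hi)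

open MvPolynomial in
lemma pderiv_prod_X_s11 (i : σ) (t : Finset σ) :
    pderiv i (∏ j ∈ t, (X j : MvPolynomial σ ℂ)) =
      if i ∈ t then ∏ j ∈ t.erase i, X j else 0 := by
  induction t using Finset.induction_on with
  | empty => simp [pderiv_one]
  | insert _ _ ha =>
    rename_i a t ih
    rw [prod_insert ha, pderiv_mul, ih]
    by_cases hia : i = a
    · subst hia
      rw [pderiv_X_self, if_neg ha, if_pos (mem_insert_self _ _), erase_insert ha]
      ring
    · rw [pderiv_X_of_ne (Ne.symm hia), zero_mul, zero_add]
      by_cases hit : i ∈ t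
      · rw [if_pos hit, if_pos (mem_insert_of_mem hit), erase_insert_of_ne (Ne.symm hia),
          prod_insert (fun h => ha (mem_of_mem_erase h))]
      · rw [if_neg hit, if_neg (by simp [hia, hit]), mul_zero]

open MvPolynomial in
lemma eval_pderiv_esymm [Fintype σ] (θ : σ → ℂ) (i : σ) (m : ℕ) :
    eval θ (pderiv i (esymm σ ℂ (m + 1))) = Eaux θ m (univ.erase i) := by
  rw [esymm, map_sum, map_sum]
  have step : ∀ t ∈ powersetCard (m + 1) (univ : Finset σ),
      eval θ (pderiv i (∏ j ∈ t, (X j : MvPolynomial σ ℂ)))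
        = if i ∈ t then ∏ j ∈ t.erase i, θ j else 0 := by
    intro t _
    rw [pderiv_prod_X_s11]
    split <;> simp
  rw [sum_congr rfl step, sum_ite, sum_const_zero, add_zero]
  have himg : (powersetCard (m + 1) (univ : Finset σ)).filter (fun t => i ∈ t)
      = (powersetCard m ((univ : Finset σ).erase i)).image (insert i) := by
    ext t
    simp only [mem_filter, mem_powersetCard, mem_image]
    constructor
    · rintro ⟨⟨-, hc⟩, hit⟩
      exact ⟨t.erase i, ⟨erase_subset_erase _ (subset_univ t), by simp [card_erase_of_mem hit, hc]⟩,
        insert_erase hit⟩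
    · rintro ⟨s, ⟨hs, hc⟩, rfl⟩
      have his : i ∉ s := fun h => (notMem_erase i univ) (hs h)
      exact ⟨⟨subset_univ _, by rw [card_insert_of_notMem his, hc]⟩, mem_insert_self _ _⟩
  rw [himg, sum_image, Eaux]
  · refine sum_congr rfl fun s hs => ?_
    have his : i ∉ s := fun h => (notMem_erase i univ) ((mem_powersetCard.mp hs).1 h)
    rw [erase_insert his]
  · intro s hs t ht hst
    have hs' : i ∉ s := fun h => (notMem_erase i univ) ((mem_powersetCard.mp hs).1 h)
    have ht' : i ∉ t := fun h => (notMem_erase i univ) ((mem_powersetCard.mp ht).1 h)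
    rw [← erase_insert hs', ← erase_insert ht', hst]

open MvPolynomial in
/-- For `2 ≤ m ≤ d`, all partial derivatives of the elementary symmetric polynomial `e_m`
vanish at a point `θ ∈ ℂ^d` if and only if `θ` has at most `m - 2` nonzero coordinates;
consequently, the common zero locus of the `d` partial derivatives of `e_m` is the union
of the coordinate subspaces spanned by `m - 2` of the standard basis vectors. -/
theorem stmt11 {d m : ℕ} (hm : 2 ≤ m) (hmd : m ≤ d) :
    (∀ θ : Fin d → ℂ,
      (∀ i, eval θ (pderiv i (esymm (Fin d) ℂ m)) = 0) ↔
        {i | θ i ≠ 0}.ncard ≤ m - 2) ∧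
    {θ : Fin d → ℂ | ∀ i, eval θ (pderiv i (esymm (Fin d) ℂ m)) = 0} =
      ⋃ (S : Finset (Fin d)) (_ : S.card = m - 2),
        {θ : Fin d → ℂ | ∀ i ∉ S, θ i = 0} := by
  classical
  obtain ⟨k, rfl⟩ : ∃ k, m = k + 2 := ⟨m - 2, by omega⟩
  have hk2 : k + 2 - 2 = k := by omega
  have main : ∀ θ : Fin d → ℂ,
      (∀ i, eval θ (pderiv i (esymm (Fin d) ℂ (k + 2))) = 0) ↔
        {i | θ i ≠ 0}.ncard ≤ k := by
    intro θ
    set S : Finset (Fin d) := univ.filter (fun j => θ j ≠ 0) with hS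
    have hSset : {i | θ i ≠ 0} = ↑S := by
      ext i; simp [hS]
    have hncard : {i | θ i ≠ 0}.ncard = S.card := by
      rw [hSset, Set.ncard_coe_finset]
    have heval : ∀ i, eval θ (pderiv i (esymm (Fin d) ℂ (k + 2)))
        = Eaux θ (k + 1) (S.erase i) := by
      intro i
      rw [eval_pderiv_esymm θ i (k + 1), Eaux_filter, filter_erase]
    constructor
    · intro H
      rw [hncard]
      by_contra hcon
      push_neg at hcon
      rcases Nat.lt_or_ge S.card (k + 2) with hlt | hge
      · -- S.card = k + 1
        have hcard : S.card = k + 1 := by omega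
        have hex : ∃ i, i ∉ S := by
          by_contra hall
          push_neg at hall
          have := card_le_card (fun x _ => hall x : (univ : Finset (Fin d)) ⊆ S)
          rw [card_univ, Fintype.card_fin] at this
          omega
        obtain ⟨i, hi⟩ := hex
        have h0 := H i
        rw [heval i, erase_eq_of_notMem hi] at h0
        have : Eaux θ (k + 1) S = ∏ j ∈ S, θ j := by
          rw [Eaux, ← hcard, powersetCard_self, sum_singleton]
        rw [this] at h0
        exact prod_ne_zero_iff.mpr (fun j hj => (mem_filter.mp hj).2) h0
      · obtain ⟨i, hi, hne⟩ := Eaux_key θ (k + 1) S hge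
          (fun j hj => (mem_filter.mp hj).2)
        exact hne (by rw [← heval i]; exact H i)
    · intro h i
      rw [heval i, Eaux]
      have : (S.erase i).card < k + 1 := by
        have h1 := card_erase_le (s := S) (a := i)
        rw [hncard] at h
        omega
      rw [powersetCard_eq_empty.mpr this, sum_empty]
  refine ⟨main, ?_⟩
  ext θ
  simp only [Set.mem_setOf_eq, Set.mem_iUnion]
  rw [main θ, hk2]
  constructor
  · intro h
    have hScard : ({i | θ i ≠ 0} : Set (Fin d)).ncard
        = (univ.filter (fun j => θ j ≠ 0)).card := by
      rw [show {i | θ i ≠ 0} = ↑(univ.filter (fun j => θ j ≠ 0)) by ext i; simp,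
        Set.ncard_coe_finset]
    obtain ⟨T, hST, -, hTcard⟩ := exists_subsuperset_card_eq (n := k)
      (subset_univ (univ.filter (fun j => θ j ≠ 0))) (by rw [← hScard]; exact h)
      (by rw [card_univ, Fintype.card_fin]; omega)
    refine ⟨T, hTcard, fun i hiT => ?_⟩
    by_contra hne
    exact hiT (hST (mem_filter.mpr ⟨mem_univ i, hne⟩))
  · rintro ⟨T, hTcard, hT⟩
    have hsub : {i | θ i ≠ 0} ⊆ ↑T := by
      intro i hi
      by_contra hiT
      exact hi (hT i hiT)
    calc ({i | θ i ≠ 0} : Set (Fin d)).ncard ≤ (↑T : Set (Fin d)).ncard :=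
          Set.ncard_le_ncard hsub T.finite_toSet
      _ = T.card := Set.ncard_coe_finset T
      _ ≤ k := le_of_eq hTcard
end

section
/- Let n ≥ 1 and 1 ≤ k ≤ n be integers. The Lebesgue volume of the set {x ∈ ℝ^n : 0 ≤ x_i ≤ 1 for all i, and k−1 ≤ x_1+⋯+x_n ≤ k} equals A(n, k−1)/n!, where A(n, j) is the Eulerian number, i.e. the number of permutations σ of {0,1,…,n−1} having exactly j ascents (an ascent of σ being an index 0 ≤ i < n−1 with σ(i) < σ(i+1)). -/
open MeasureTheory Finset
open scoped ENNReal


open scoped Classical in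
/-- The number of ascents of a permutation `σ` of `{0, 1, …, n-1}`: the number of indices
`0 ≤ i < n-1` with `σ(i) < σ(i+1)`. -/
noncomputable def ascentCount (n : ℕ) (σ : Equiv.Perm (Fin n)) : ℕ :=
  ((Finset.univ : Finset (Fin n)).filter fun i : Fin n =>
    ∃ h : i.val + 1 < n, σ i < σ ⟨i.val + 1, h⟩).card

open scoped Classical in
/-- The Eulerian number `A(r, s)`: the number of permutations of a linearly ordered
`r`-element set with exactly `s` ascents. -/
noncomputable def eulerianNumber (r s : ℕ) : ℕ :=
  ((Finset.univ : Finset (Equiv.Perm (Fin r))).filter fun σ => ascentCount r σ = s).card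

namespace Stmt14Aux

variable {n : ℕ}

/-- The index one below `i` (or `0` if `i = 0`). -/
def prIdx (i : Fin n) : Fin n := ⟨i.val - 1, lt_of_le_of_lt (Nat.sub_le _ _) i.isLt⟩

lemma prIdx_lt {i : Fin n} (hi : 0 < i.val) : prIdx i < i := by
  simp only [prIdx, Fin.lt_def]; omega

noncomputable def pad (y : Fin n → ℝ) (j : ℕ) : ℝ := if h : j < n then y ⟨j, h⟩ else 0

noncomputable def Pfun (y : Fin n → ℝ) (i : Fin n) : ℝ := ∑ j ∈ Finset.range (i.val + 1), pad y j

noncomputable def Dfun (x : Fin n → ℝ) (i : Fin n) : ℝ :=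
  x i - if i.val = 0 then 0 else x (prIdx i)

lemma pad_add (y z : Fin n → ℝ) (j : ℕ) : pad (y + z) j = pad y j + pad z j := by
  unfold pad; split <;> simp

lemma pad_smul (c : ℝ) (y : Fin n → ℝ) (j : ℕ) : pad (c • y) j = c * pad y j := by
  unfold pad; split <;> simp

noncomputable def Plin : (Fin n → ℝ) →ₗ[ℝ] (Fin n → ℝ) where
  toFun := Pfun
  map_add' y z := by funext i; simp [Pfun, pad_add, Finset.sum_add_distrib]
  map_smul' c y := by
    funext i; simp [Pfun, pad_smul, Finset.mul_sum]

noncomputable def Dlin : (Fin n → ℝ) →ₗ[ℝ] (Fin n → ℝ) where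
  toFun := Dfun
  map_add' y z := by funext i; unfold Dfun; by_cases h : (i : ℕ) = 0 <;> simp [h] <;> ring
  map_smul' c y := by funext i; simp only [RingHom.id_apply, Pi.smul_apply, smul_eq_mul, Dfun]; by_cases h : (i : ℕ) = 0 <;> simp [h] <;> ring

lemma Pfun_Dfun (x : Fin n → ℝ) : Pfun (Dfun x) = x := by
  funext i
  obtain ⟨m, hm⟩ := i
  induction m with
  | zero =>
    simp [Pfun, pad, Dfun, hm, prIdx]
  | succ m ih =>
    have hmn : m < n := by omega
    have : Pfun (Dfun x) ⟨m + 1, hm⟩ =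
        Pfun (Dfun x) ⟨m, hmn⟩ + pad (Dfun x) (m + 1) := by
      simp [Pfun, Finset.sum_range_succ]
    rw [this, ih hmn]
    simp only [pad, hm, dif_pos]
    have : Dfun x ⟨m + 1, hm⟩ = x ⟨m + 1, hm⟩ - x ⟨m, hmn⟩ := by
      simp [Dfun, prIdx]
    rw [this]; ring

lemma Dfun_Pfun (y : Fin n → ℝ) : Dfun (Pfun y) = y := by
  funext i
  obtain ⟨m, hm⟩ := i
  rcases Nat.eq_zero_or_pos m with rfl | hmpos
  · simp [Dfun, Pfun, pad, hm]
  · have hne : ¬ (m = 0) := by omega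
    have h1 : Dfun (Pfun y) ⟨m, hm⟩ = Pfun y ⟨m, hm⟩ - Pfun y ⟨m - 1, by omega⟩ := by
      simp [Dfun, prIdx, hne]
    rw [h1]
    have h2 : Pfun y ⟨m, hm⟩ = Pfun y ⟨m - 1, by omega⟩ + pad y m := by
      simp only [Pfun]
      have : m - 1 + 1 + 1 = m + 1 := by omega
      rw [← this, Finset.sum_range_succ]
      congr 2
      omega
    rw [h2]
    simp [pad, hm]


lemma det_Dlin : LinearMap.det (Dlin (n := n)) = 1 := by
  classical
  rw [← LinearMap.det_toMatrix (Pi.basisFun ℝ (Fin n))]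
  set M := LinearMap.toMatrix (Pi.basisFun ℝ (Fin n)) (Pi.basisFun ℝ (Fin n)) Dlin with hM
  have hentry : ∀ i j : Fin n, M i j =
      (if j = i then (1:ℝ) else 0) - if (i : ℕ) = 0 then 0 else (if j = prIdx i then 1 else 0) := by
    intro i j
    rw [hM, LinearMap.toMatrix_apply]
    simp only [Pi.basisFun_apply, Pi.basisFun_repr, Dlin, LinearMap.coe_mk, AddHom.coe_mk, Dfun]
    by_cases h : (i : ℕ) = 0 <;> simp [h, Pi.single_apply, eq_comm]
  have htri : M.BlockTriangular OrderDual.toDual := by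
    intro i j hij
    have hij' : i < j := hij
    rw [hentry]
    have h1 : ¬ (j = i) := by exact fun h => absurd h (by exact ne_of_gt hij')
    have h2 : ¬ (j = prIdx i) := by
      intro h
      have : (j : ℕ) = (i : ℕ) - 1 := by rw [h]; rfl
      have := Fin.lt_def.mp hij'
      omega
    simp [h1, h2]
  rw [Matrix.det_of_lowerTriangular M htri]
  apply Finset.prod_eq_one
  intro i _
  rw [hentry]
  have : ¬ (i = prIdx i) ∨ (i : ℕ) = 0 := by
    by_cases h : (i : ℕ) = 0
    · exact Or.inr h
    · left; intro he
      have : (i : ℕ) = (i : ℕ) - 1 := by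
        conv_lhs => rw [he]
        simp [prIdx]
      omega
  rcases this with h | h
  · by_cases h0 : (i : ℕ) = 0 <;> simp [h0, h]
  · simp [h]

lemma sum_eq_Pfun_last (hn : 0 < n) (z : Fin n → ℝ) :
    ∑ i, z i = Pfun z ⟨n - 1, by omega⟩ := by
  have h : n - 1 + 1 = n := by omega
  simp only [Pfun, h]
  rw [Fin.sum_univ_eq_sum_range (fun j => pad z j) n |>.symm] at *
  · congr 1
    funext i
    simp [pad, i.isLt]


/-- The open order simplex associated to a permutation. -/
def OC (σ : Equiv.Perm (Fin n)) : Set (Fin n → ℝ) :=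
  {x | (∀ i, x i ∈ Set.Ioo (0:ℝ) 1) ∧ StrictMono (x ∘ σ)}

lemma measurableSet_OC (σ : Equiv.Perm (Fin n)) : MeasurableSet (OC σ) := by
  have h1 : OC σ = (⋂ i, {x : Fin n → ℝ | x i ∈ Set.Ioo (0:ℝ) 1}) ∩
      ⋂ (i : Fin n), ⋂ (j : Fin n), {x : Fin n → ℝ | i < j → x (σ i) < x (σ j)} := by
    ext x
    simp only [OC, Set.mem_setOf_eq, Set.mem_inter_iff, Set.mem_iInter]
    constructor
    · rintro ⟨h1, h2⟩; exact ⟨h1, fun i j hij => h2 hij⟩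
    · rintro ⟨h1, h2⟩; exact ⟨h1, fun i j hij => h2 i j hij⟩
  rw [h1]
  apply MeasurableSet.inter
  · exact MeasurableSet.iInter fun i =>
      (measurable_pi_apply i) measurableSet_Ioo
  · refine MeasurableSet.iInter fun i => MeasurableSet.iInter fun j => ?_
    by_cases hij : i < j
    · have : {x : Fin n → ℝ | i < j → x (σ i) < x (σ j)} = {x | x (σ i) < x (σ j)} := by
        ext x; simp [hij]
      rw [this]
      exact measurableSet_lt (measurable_pi_apply _) (measurable_pi_apply _)
    · have : {x : Fin n → ℝ | i < j → x (σ i) < x (σ j)} = Set.univ := by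
        ext x; simp [hij]
      rw [this]; exact MeasurableSet.univ

lemma injective_of_mem_OC {σ : Equiv.Perm (Fin n)} {x : Fin n → ℝ} (hx : x ∈ OC σ) :
    Function.Injective x := by
  have : Function.Injective (x ∘ σ) := hx.2.injective
  have h : x = (x ∘ σ) ∘ σ.symm := by funext i; simp
  rw [h]
  exact this.comp σ.symm.injective

lemma lt_iff_of_mem_OC {σ : Equiv.Perm (Fin n)} {x : Fin n → ℝ} (hx : x ∈ OC σ) (a b : Fin n) :
    x a < x b ↔ σ.symm a < σ.symm b := by
  have := hx.2.lt_iff_lt (a := σ.symm a) (b := σ.symm b)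
  simpa using this

lemma eq_of_mem_OC {σ τ : Equiv.Perm (Fin n)} {x : Fin n → ℝ} (hσ : x ∈ OC σ) (hτ : x ∈ OC τ) :
    σ = τ := by
  have h1 : x ∘ σ = x ∘ τ := by
    apply (StrictMono.range_inj hσ.2 hτ.2).mp
    rw [Set.range_comp, Set.range_comp]
    simp [Set.range_eq_univ.mpr σ.surjective, Set.range_eq_univ.mpr τ.surjective]
  apply Equiv.ext
  intro i
  exact injective_of_mem_OC hσ (congrFun h1 i)

lemma vol_OC (σ : Equiv.Perm (Fin n)) : volume (OC σ) = volume (OC (1 : Equiv.Perm (Fin n))) := by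
  have hmp := volume_measurePreserving_piCongrLeft (fun _ : Fin n => ℝ) σ
  have himg : (MeasurableEquiv.piCongrLeft (fun _ : Fin n => ℝ) σ) ⁻¹' (OC σ) =
      OC (1 : Equiv.Perm (Fin n)) := by
    have happ : ∀ (f : Fin n → ℝ) (i : Fin n),
        (MeasurableEquiv.piCongrLeft (fun _ : Fin n => ℝ) σ) f i = f (σ.symm i) := by
      intro f i
      simp [MeasurableEquiv.piCongrLeft, Equiv.piCongrLeft, Equiv.piCongrLeft']
    ext f
    simp only [Set.mem_preimage, OC, Set.mem_setOf_eq]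
    constructor
    · rintro ⟨h1, h2⟩
      constructor
      · intro i
        have := h1 (σ i)
        rwa [happ, Equiv.symm_apply_apply] at this
      · intro a b hab
        have := h2 hab
        simp only [Function.comp_apply, happ, Equiv.symm_apply_apply] at this ⊢
        simpa using this
    · rintro ⟨h1, h2⟩
      constructor
      · intro i
        rw [happ]; exact h1 _
      · intro a b hab
        have := h2 hab
        simp only [Function.comp_apply, happ, Equiv.symm_apply_apply] at this ⊢
        simpa using this
  calc volume (OC σ) = volume ((MeasurableEquiv.piCongrLeft (fun _ : Fin n => ℝ) σ) ⁻¹' (OC σ)) :=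
        (hmp.measure_preimage (measurableSet_OC σ).nullMeasurableSet).symm
    _ = _ := by rw [himg]


lemma null_hyperplane (f : (Fin n → ℝ) →ₗ[ℝ] ℝ) (hf : ∃ u, f u ≠ 0) (c : ℝ) :
    volume {y : Fin n → ℝ | f y = c} = 0 := by
  obtain ⟨u, hu⟩ := hf
  set y₀ : Fin n → ℝ := (c / f u) • u with hy₀
  have hfy₀ : f y₀ = c := by
    rw [hy₀, LinearMap.map_smul, smul_eq_mul]
    field_simp
  have hset : {y : Fin n → ℝ | f y = c} = (fun z => z + y₀) '' (LinearMap.ker f : Set (Fin n → ℝ)) := by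
    ext y
    simp only [Set.mem_setOf_eq, Set.mem_image, SetLike.mem_coe, LinearMap.mem_ker]
    constructor
    · intro hy
      exact ⟨y - y₀, by rw [map_sub, hy, hfy₀, sub_self], by ring⟩
    · rintro ⟨z, hz, rfl⟩
      rw [map_add, hz, hfy₀, zero_add]
  rw [hset, Set.image_add_right, measure_preimage_add_right]
  apply Measure.addHaar_submodule
  intro htop
  apply hu
  have : u ∈ LinearMap.ker f := htop ▸ Submodule.mem_top
  exact this

def Cube : Set (Fin n → ℝ) := Set.pi Set.univ (fun _ : Fin n => Set.Ioo (0:ℝ) 1)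

lemma vol_Cube : volume (Cube (n := n)) = 1 := by
  rw [Cube, volume_pi_pi]
  simp

lemma OC_subset_Cube (σ : Equiv.Perm (Fin n)) : OC σ ⊆ Cube := by
  intro x hx i _
  exact hx.1 i

def BadSet : Set (Fin n → ℝ) :=
  ⋃ (p : Fin n × Fin n), ⋃ (_ : p.1 ≠ p.2), {x : Fin n → ℝ | x p.1 = x p.2}

lemma null_BadSet : volume (BadSet (n := n)) = 0 := by
  rw [BadSet]
  apply measure_iUnion_null
  intro p
  apply measure_iUnion_null
  intro hne
  set g : (Fin n → ℝ) →ₗ[ℝ] ℝ :=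
    (LinearMap.proj (R := ℝ) (φ := fun _ : Fin n => ℝ) p.1)
      - (LinearMap.proj (R := ℝ) (φ := fun _ : Fin n => ℝ) p.2) with hg
  have : {x : Fin n → ℝ | x p.1 = x p.2} = {y : Fin n → ℝ | g y = 0} := by
    ext y
    simp [hg, sub_eq_zero, LinearMap.proj, eq_comm]
  rw [this]
  apply null_hyperplane
  refine ⟨Pi.single p.1 1, ?_⟩
  simp [hg, LinearMap.proj, Pi.single_apply, hne, Ne.symm hne]

lemma cube_subset_union :
    Cube (n := n) ⊆ (⋃ σ : Equiv.Perm (Fin n), OC σ) ∪ BadSet := by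
  intro x hx
  by_cases hinj : Function.Injective x
  · left
    refine Set.mem_iUnion.mpr ⟨Tuple.sort x, ?_, ?_⟩
    · intro i; exact hx i (Set.mem_univ i)
    · exact (Tuple.monotone_sort x).strictMono_of_injective
        (hinj.comp (Tuple.sort x).injective)
  · right
    rw [Function.Injective] at hinj
    push_neg at hinj
    obtain ⟨a, b, hab, hne⟩ := hinj
    exact Set.mem_iUnion.mpr ⟨(a, b), Set.mem_iUnion.mpr ⟨hne, hab⟩⟩

lemma vol_OC_eq_inv_factorial (σ : Equiv.Perm (Fin n)) :
    volume (OC σ) = ((n.factorial : ℝ≥0∞))⁻¹ := by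
  rw [vol_OC]
  have hd : Pairwise (Function.onFun Disjoint (OC (n := n))) := by
    intro σ τ hne
    exact Set.disjoint_left.mpr fun x hσ hτ => hne (eq_of_mem_OC hσ hτ)
  have hU : volume (⋃ σ : Equiv.Perm (Fin n), OC σ)
      = (n.factorial : ℝ≥0∞) * volume (OC (1 : Equiv.Perm (Fin n))) := by
    rw [measure_iUnion hd (fun σ => measurableSet_OC σ), tsum_fintype]
    have : ∀ σ : Equiv.Perm (Fin n), volume (OC σ) = volume (OC (1 : Equiv.Perm (Fin n))) :=
      vol_OC
    rw [Finset.sum_congr rfl (fun σ _ => this σ), Finset.sum_const, Finset.card_univ,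
      Fintype.card_perm, Fintype.card_fin, nsmul_eq_mul]
  have hle : volume (⋃ σ : Equiv.Perm (Fin n), OC σ) ≤ 1 := by
    rw [← vol_Cube (n := n)]
    exact measure_mono (Set.iUnion_subset OC_subset_Cube)
  have hge : (1 : ℝ≥0∞) ≤ volume (⋃ σ : Equiv.Perm (Fin n), OC σ) := by
    calc (1 : ℝ≥0∞) = volume (Cube (n := n)) := vol_Cube.symm
      _ ≤ volume ((⋃ σ : Equiv.Perm (Fin n), OC σ) ∪ BadSet) := measure_mono cube_subset_union
      _ ≤ volume (⋃ σ : Equiv.Perm (Fin n), OC σ) + volume (BadSet (n := n)) := measure_union_le _ _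
      _ = volume (⋃ σ : Equiv.Perm (Fin n), OC σ) := by rw [null_BadSet, add_zero]
  have heq : (n.factorial : ℝ≥0∞) * volume (OC (1 : Equiv.Perm (Fin n))) = 1 :=
    le_antisymm (hU ▸ hle) (hU ▸ hge)
  exact ENNReal.eq_inv_of_mul_eq_one_left (by rw [mul_comm] at heq; exact heq)


open scoped Classical in
/-- The word-descent count of `τ`: positions `i > 0` with `τ i < τ (i-1)`. -/
noncomputable def wcount (τ : Equiv.Perm (Fin n)) : ℕ :=
  (Finset.univ.filter fun i : Fin n => 0 < i.val ∧ τ i < τ (prIdx i)).card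

/-- descent count relevant to the simplex `OC σ`. -/
noncomputable def dcount (σ : Equiv.Perm (Fin n)) : ℕ := wcount σ.symm

open scoped Classical in
noncomputable def dv (σ : Equiv.Perm (Fin n)) (i : Fin n) : ℝ :=
  if 0 < i.val ∧ σ.symm i < σ.symm (prIdx i) then 1 else 0

lemma sum_dv (σ : Equiv.Perm (Fin n)) : ∑ i, dv σ i = (dcount σ : ℝ) := by
  classical
  rw [dcount, wcount]
  simp [dv, Finset.sum_boole]

noncomputable def Fmap (σ : Equiv.Perm (Fin n)) (x : Fin n → ℝ) : Fin n → ℝ :=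
  fun i => Dfun x i + dv σ i

noncomputable def Gmap (σ : Equiv.Perm (Fin n)) (y : Fin n → ℝ) : Fin n → ℝ :=
  Pfun (fun i => y i - dv σ i)

lemma Gmap_Fmap (σ : Equiv.Perm (Fin n)) (x : Fin n → ℝ) : Gmap σ (Fmap σ x) = x := by
  have : (fun i => Fmap σ x i - dv σ i) = Dfun x := by
    funext i; simp [Fmap]
  rw [Gmap, this, Pfun_Dfun]

lemma Fmap_Gmap (σ : Equiv.Perm (Fin n)) (y : Fin n → ℝ) : Fmap σ (Gmap σ y) = y := by
  funext i
  have := congrFun (Dfun_Pfun (fun i => y i - dv σ i)) i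
  simp only [Fmap, Gmap, this]
  ring

lemma Fmap_image_eq_preimage (σ : Equiv.Perm (Fin n)) (s : Set (Fin n → ℝ)) :
    Fmap σ '' s = Gmap σ ⁻¹' s :=
  congrFun (Set.image_eq_preimage_of_inverse (Gmap_Fmap σ) (Fmap_Gmap σ)) s

lemma measurable_Pfun : Measurable (Pfun (n := n)) := by
  apply measurable_pi_lambda
  intro i
  apply Finset.measurable_sum
  intro j _
  unfold pad
  split
  · exact measurable_pi_apply _
  · exact measurable_const

lemma measurable_Gmap (σ : Equiv.Perm (Fin n)) : Measurable (Gmap σ) := by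
  apply measurable_Pfun.comp
  apply measurable_pi_lambda
  intro i
  exact (measurable_pi_apply i).sub measurable_const

lemma measurableSet_Fmap_image (σ : Equiv.Perm (Fin n)) {s : Set (Fin n → ℝ)}
    (hs : MeasurableSet s) : MeasurableSet (Fmap σ '' s) := by
  rw [Fmap_image_eq_preimage]
  exact (measurable_Gmap σ) hs

lemma vol_Fmap_image (σ : Equiv.Perm (Fin n)) (s : Set (Fin n → ℝ)) :
    volume (Fmap σ '' s) = volume s := by
  have h1 : Fmap σ '' s = (fun y => y + dv σ) '' (Dlin '' s) := by
    rw [Set.image_image]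
    rfl
  rw [h1, Set.image_add_right, measure_preimage_add_right,
    Measure.addHaar_image_linearMap, det_Dlin]
  simp

lemma sum_Fmap (hn : 0 < n) (σ : Equiv.Perm (Fin n)) (x : Fin n → ℝ) :
    ∑ i, Fmap σ x i = x ⟨n - 1, by omega⟩ + (dcount σ : ℝ) := by
  have h1 : ∑ i, Fmap σ x i = (∑ i, Dfun x i) + ∑ i, dv σ i := by
    rw [← Finset.sum_add_distrib]; rfl
  rw [h1, sum_dv, sum_eq_Pfun_last hn (Dfun x), Pfun_Dfun]

lemma Fmap_mem_Ioo {σ : Equiv.Perm (Fin n)} {x : Fin n → ℝ} (hx : x ∈ OC σ) (i : Fin n) :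
    0 < Fmap σ x i ∧ Fmap σ x i < 1 := by
  rcases Nat.eq_zero_or_pos i.val with h0 | hpos
  · have hdv : dv σ i = 0 := by simp [dv, h0]
    have : Fmap σ x i = x i := by simp [Fmap, Dfun, h0, hdv]
    rw [this]
    exact ⟨(hx.1 i).1, (hx.1 i).2⟩
  · set p := prIdx i with hp
    have hpi : p ≠ i := by
      intro h
      have : (p : ℕ) = (i : ℕ) - 1 := rfl
      rw [h] at this
      omega
    have hxpi : x p ≠ x i := fun h => hpi (injective_of_mem_OC hx h)
    have hne0 : ¬ (i : ℕ) = 0 := by omega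
    by_cases hlt : σ.symm i < σ.symm p
    · have hdv : dv σ i = 1 := by simp [dv, hpos, hlt, ← hp]
      have hxlt : x i < x p := (lt_iff_of_mem_OC hx i p).mpr hlt
      have : Fmap σ x i = x i - x p + 1 := by simp [Fmap, Dfun, hne0, hdv, ← hp]
      rw [this]
      have h1 := (hx.1 i).1
      have h2 := (hx.1 p).2
      constructor <;> nlinarith
    · have hdv : dv σ i = 0 := by simp [dv, hlt, ← hp, not_lt.mp hlt]
      have hxlt : x p < x i := by
        rcases lt_trichotomy (x p) (x i) with h | h | h
        · exact h
        · exact absurd h hxpi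
        · exact absurd ((lt_iff_of_mem_OC hx i p).mp h) hlt
      have : Fmap σ x i = x i - x p := by simp [Fmap, Dfun, hne0, hdv, ← hp]
      rw [this]
      have h1 := (hx.1 p).1
      have h2 := (hx.1 i).2
      constructor <;> nlinarith


def BadSet2 : Set (Fin n → ℝ) :=
  (⋃ (i : Fin n), ⋃ (m : ℤ), {y : Fin n → ℝ | Pfun y i = (m : ℝ)}) ∪
  ⋃ (p : Fin n × Fin n), ⋃ (_ : p.1 < p.2), ⋃ (m : ℤ),
    {y : Fin n → ℝ | Pfun y p.2 - Pfun y p.1 = (m : ℝ)}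

lemma Pfun_const_one (i : Fin n) : Pfun (fun _ => (1:ℝ)) i = (i : ℕ) + 1 := by
  rw [Pfun]
  have : ∀ j ∈ Finset.range ((i : ℕ) + 1), pad (n := n) (fun _ => (1:ℝ)) j = 1 := by
    intro j hj
    rw [Finset.mem_range] at hj
    have : j < n := by have := i.isLt; omega
    simp [pad, this]
  rw [Finset.sum_congr rfl this]
  simp

lemma null_BadSet2 : volume (BadSet2 (n := n)) = 0 := by
  rw [BadSet2]
  apply measure_union_null
  · apply measure_iUnion_null
    intro i
    apply measure_iUnion_null
    intro m
    have : {y : Fin n → ℝ | Pfun y i = (m : ℝ)} =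
        {y : Fin n → ℝ | ((LinearMap.proj (R := ℝ) (φ := fun _ : Fin n => ℝ) i).comp Plin) y
          = (m : ℝ)} := by
      ext y; simp [LinearMap.proj, Plin]
    rw [this]
    apply null_hyperplane
    refine ⟨fun _ => 1, ?_⟩
    simp only [LinearMap.comp_apply]
    have : Plin (n := n) (fun _ => 1) = Pfun (fun _ => 1) := rfl
    rw [this]
    simp only [LinearMap.proj_apply]
    rw [Pfun_const_one]
    positivity
  · apply measure_iUnion_null
    intro p
    apply measure_iUnion_null
    intro hp
    apply measure_iUnion_null
    intro m
    set g : (Fin n → ℝ) →ₗ[ℝ] ℝ :=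
      ((LinearMap.proj (R := ℝ) (φ := fun _ : Fin n => ℝ) p.2).comp Plin)
        - ((LinearMap.proj (R := ℝ) (φ := fun _ : Fin n => ℝ) p.1).comp Plin) with hg
    have : {y : Fin n → ℝ | Pfun y p.2 - Pfun y p.1 = (m : ℝ)} =
        {y : Fin n → ℝ | g y = (m : ℝ)} := by
      ext y; simp [hg, LinearMap.proj, Plin]
    rw [this]
    apply null_hyperplane
    refine ⟨fun _ => 1, ?_⟩
    have h1 : g (fun _ => 1) = Pfun (fun _ => (1:ℝ)) p.2 - Pfun (fun _ => (1:ℝ)) p.1 := rfl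
    rw [h1, Pfun_const_one, Pfun_const_one]
    have : (p.1 : ℕ) < (p.2 : ℕ) := hp
    intro hcon
    have : ((p.2 : ℕ) : ℝ) = ((p.1 : ℕ) : ℝ) := by linarith
    have := Nat.cast_injective (R := ℝ) this
    omega


lemma fract_Pfun_Fmap {σ : Equiv.Perm (Fin n)} {x : Fin n → ℝ} (hx : x ∈ OC σ) (i : Fin n) :
    Int.fract (Pfun (Fmap σ x) i) = x i := by
  classical
  have hq : ∃ q : ℤ, Pfun (dv σ) i = (q : ℝ) := by
    refine ⟨∑ j ∈ Finset.range ((i : ℕ) + 1),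
      if h : j < n then
        (if 0 < ((⟨j, h⟩ : Fin n) : ℕ) ∧ σ.symm ⟨j, h⟩ < σ.symm (prIdx ⟨j, h⟩) then (1 : ℤ) else 0)
      else 0, ?_⟩
    rw [Pfun]
    push_cast
    apply Finset.sum_congr rfl
    intro j _
    unfold pad dv
    split
    · split <;> simp
    · simp
  have hPsum : Pfun (Fmap σ x) i = x i + Pfun (dv σ) i := by
    have h1 : Fmap σ x = Dfun x + dv σ := rfl
    have h2 : Pfun (Dfun x + dv σ) = Pfun (Dfun x) + Pfun (dv σ) :=
      Plin.map_add (Dfun x) (dv σ)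
    rw [h1]
    calc Pfun (Dfun x + dv σ) i = (Pfun (Dfun x) + Pfun (dv σ)) i := by rw [h2]
      _ = Pfun (Dfun x) i + Pfun (dv σ) i := rfl
      _ = x i + Pfun (dv σ) i := by rw [Pfun_Dfun]
  obtain ⟨q, hq⟩ := hq
  rw [hPsum, hq, Int.fract_add_intCast,
    Int.fract_eq_self.mpr ⟨(hx.1 i).1.le, (hx.1 i).2⟩]

lemma image_disjoint {σ τ : Equiv.Perm (Fin n)} (hne : σ ≠ τ) :
    Disjoint (Fmap σ '' OC σ) (Fmap τ '' OC τ) := by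
  rw [Set.disjoint_left]
  rintro y ⟨x, hx, rfl⟩ ⟨x', hx', heq⟩
  apply hne
  have hxx : x = x' := by
    funext i
    rw [← fract_Pfun_Fmap hx i, ← fract_Pfun_Fmap hx' i, heq]
  rw [hxx] at hx
  exact eq_of_mem_OC hx hx'

lemma Pfun_step {y : Fin n → ℝ} {i : Fin n} (hi : 0 < (i : ℕ)) :
    Pfun y i = Pfun y (prIdx i) + y i := by
  have hm : (i : ℕ) = ((i : ℕ) - 1) + 1 := by omega
  rw [Pfun, Pfun]
  have hpr : ((prIdx i : Fin n) : ℕ) = (i : ℕ) - 1 := rfl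
  rw [hpr]
  conv_lhs => rw [hm, Finset.sum_range_succ]
  congr 1
  unfold pad
  rw [dif_pos (by omega : (i : ℕ) - 1 + 1 < n)]
  congr 1
  apply Fin.ext
  simp
  omega

lemma cover (hn : 0 < n) {k : ℕ} (hk1 : 1 ≤ k)
    {y : Fin n → ℝ} (hy1 : ∀ i, 0 ≤ y i ∧ y i ≤ 1)
    (hy2 : (k : ℝ) - 1 ≤ ∑ i, y i) (hy3 : ∑ i, y i ≤ k)
    (hbad : y ∉ BadSet2) :
    ∃ σ : Equiv.Perm (Fin n), dcount σ = k - 1 ∧ y ∈ Fmap σ '' OC σ := by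
  classical
  simp only [BadSet2, Set.mem_union, Set.mem_iUnion, Set.mem_setOf_eq, not_or,
    not_exists] at hbad
  obtain ⟨hni, hdiff⟩ := hbad
  set x : Fin n → ℝ := fun i => Int.fract (Pfun y i) with hxdef
  have hfract : ∀ i, x i = Pfun y i - (⌊Pfun y i⌋ : ℝ) := fun i => rfl
  have hx01 : ∀ i, 0 < x i ∧ x i < 1 := by
    intro i
    refine ⟨lt_of_le_of_ne (Int.fract_nonneg _) ?_, Int.fract_lt_one _⟩
    intro h
    apply hni i ⌊Pfun y i⌋
    have := hfract i
    rw [← h] at this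
    linarith
  have hinj : Function.Injective x := by
    intro a b hab
    by_contra hne
    rcases lt_trichotomy a b with h | h | h
    · apply hdiff (a, b) h (⌊Pfun y b⌋ - ⌊Pfun y a⌋)
      have h1 := hfract a
      have h2 := hfract b
      push_cast
      rw [hab] at h1
      linarith
    · exact hne h
    · apply hdiff (b, a) h (⌊Pfun y a⌋ - ⌊Pfun y b⌋)
      have h1 := hfract a
      have h2 := hfract b
      push_cast
      rw [hab] at h1
      linarith
  set σ := Tuple.sort x with hσ
  have hOC : x ∈ OC σ := by
    refine ⟨fun i => Set.mem_Ioo.mpr (hx01 i), ?_⟩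
    exact (Tuple.monotone_sort x).strictMono_of_injective (hinj.comp σ.injective)
  have hy_open : ∀ i : Fin n, 0 < (i : ℕ) → 0 < y i ∧ y i < 1 := by
    intro i hi
    have hstep := Pfun_step (y := y) hi
    have hplt : prIdx i < i := prIdx_lt hi
    constructor
    · rcases lt_or_eq_of_le (hy1 i).1 with h | h
      · exact h
      · exfalso
        apply hdiff (prIdx i, i) hplt 0
        push_cast
        rw [hstep, ← h]
        ring
    · rcases lt_or_eq_of_le (hy1 i).2 with h | h
      · exact h
      · exfalso
        apply hdiff (prIdx i, i) hplt 1
        push_cast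
        rw [hstep, h]
        ring
  have hkey : y = Fmap σ x := by
    funext i
    rcases Nat.eq_zero_or_pos (i : ℕ) with h0 | hpos
    · have hi0 : i = ⟨0, hn⟩ := Fin.ext h0
      have hP : Pfun y i = y i := by
        rw [hi0, Pfun]
        simp [pad, hn]
      have hy0 : 0 ≤ y i ∧ y i ≤ 1 := hy1 i
      have hne1 : y i ≠ 1 := by
        intro h
        apply hni i 1
        rw [hP, h]; norm_num
      have hne0 : y i ≠ 0 := by
        intro h
        apply hni i 0
        rw [hP, h]; norm_num
      have hfl : ⌊Pfun y i⌋ = 0 := by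
        rw [hP]
        apply Int.floor_eq_zero_iff.mpr
        constructor
        · exact lt_of_le_of_ne hy0.1 (Ne.symm hne0) |>.le
        · exact lt_of_le_of_ne hy0.2 hne1
      have hxi : x i = y i := by
        rw [hfract i, hfl, hP]; simp
      have : Fmap σ x i = x i := by
        simp [Fmap, Dfun, dv, h0]
      rw [this, hxi]
    · set p := prIdx i with hp
      have hne0 : ¬ (i : ℕ) = 0 := by omega
      have hstep := Pfun_step (y := y) hpos
      have heq : y i = (x i + (⌊Pfun y i⌋ : ℝ)) - (x p + (⌊Pfun y p⌋ : ℝ)) := by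
        have h1 := hfract i
        have h2 := hfract p
        rw [hstep] at h1 ⊢
        linarith
      set δ : ℤ := ⌊Pfun y i⌋ - ⌊Pfun y p⌋ with hδ
      have hδreal : (δ : ℝ) = x p - x i + y i := by
        push_cast [hδ]
        linarith
      have hyi := hy_open i hpos
      have hxi := hx01 i
      have hxp := hx01 p
      have hpi : p ≠ i := by
        intro h
        have : (p : ℕ) = (i : ℕ) - 1 := rfl
        rw [h] at this
        omega
      have hxpi : x p ≠ x i := fun h => hpi (hinj h)
      by_cases hlt : σ.symm i < σ.symm p
      · have hdv : dv σ i = 1 := by simp [dv, hpos, hlt, ← hp]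
        have hxlt : x i < x p := (lt_iff_of_mem_OC hOC i p).mpr hlt
        have hδ1 : δ = 1 := by
          have h1 : (0 : ℝ) < δ := by rw [hδreal]; linarith
          have h2 : (δ : ℝ) < 2 := by rw [hδreal]; linarith
          have h1' : (0 : ℤ) < δ := by exact_mod_cast h1
          have h2' : δ < 2 := by exact_mod_cast h2
          omega
        have : Fmap σ x i = x i - x p + 1 := by simp [Fmap, Dfun, hne0, hdv, hp]
        rw [this]
        have : (δ : ℝ) = 1 := by exact_mod_cast hδ1
        linarith [hδreal, this]
      · have hdv : dv σ i = 0 := by simp [dv, hlt, ← hp, not_lt.mp hlt]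
        have hxlt : x p < x i := by
          rcases lt_trichotomy (x p) (x i) with h | h | h
          · exact h
          · exact absurd h hxpi
          · exact absurd ((lt_iff_of_mem_OC hOC i p).mp h) hlt
        have hδ0 : δ = 0 := by
          have h1 : (-1 : ℝ) < δ := by rw [hδreal]; linarith
          have h2 : (δ : ℝ) < 1 := by rw [hδreal]; linarith
          have h1' : (-1 : ℤ) < δ := by exact_mod_cast h1
          have h2' : δ < 1 := by exact_mod_cast h2
          omega
        have : Fmap σ x i = x i - x p := by simp [Fmap, Dfun, hne0, hdv, hp]
        rw [this]
        have : (δ : ℝ) = 0 := by exact_mod_cast hδ0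
        linarith [hδreal, this]
  have hsum : ∑ i, y i = x ⟨n - 1, by omega⟩ + (dcount σ : ℝ) := by
    rw [hkey]
    exact sum_Fmap hn σ x
  have hxl := hx01 ⟨n - 1, by omega⟩
  have hdc : dcount σ = k - 1 := by
    have h1 : (dcount σ : ℝ) < k := by linarith
    have h2 : (k : ℝ) - 2 < dcount σ := by linarith
    have h1' : (dcount σ : ℤ) < k := by exact_mod_cast h1
    have h2' : (k : ℤ) - 2 < dcount σ := by exact_mod_cast h2
    omega
  exact ⟨σ, hdc, x, hOC, hkey.symm⟩


open scoped Classical in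
lemma wcount_rev (σ : Equiv.Perm (Fin n)) :
    wcount (Fin.revPerm * σ) = ascentCount n σ := by
  classical
  rw [wcount, ascentCount]
  have hcond : ∀ i : Fin n,
      (0 < (i : ℕ) ∧ (Fin.revPerm * σ : Equiv.Perm (Fin n)) i
          < (Fin.revPerm * σ : Equiv.Perm (Fin n)) (prIdx i)) ↔
      (0 < (i : ℕ) ∧ σ (prIdx i) < σ i) := by
    intro i
    simp only [Equiv.Perm.mul_apply, Fin.revPerm_apply, Fin.rev_lt_rev]
  rw [Finset.filter_congr (fun i _ => by rw [hcond i])]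
  refine Finset.card_bij' (fun a _ => prIdx a) (fun b hb => ⟨(b : ℕ) + 1, ?_⟩) ?_ ?_ ?_ ?_
  · have := (Finset.mem_filter.mp hb).2
    exact this.choose
  · intro a ha
    have ha' := (Finset.mem_filter.mp ha).2
    rw [Finset.mem_filter]
    refine ⟨Finset.mem_univ _, ?_⟩
    have hlt : ((prIdx a : Fin n) : ℕ) + 1 < n := by
      have : ((prIdx a : Fin n) : ℕ) = (a : ℕ) - 1 := rfl
      have := a.isLt
      omega
    refine ⟨hlt, ?_⟩
    have : (⟨((prIdx a : Fin n) : ℕ) + 1, hlt⟩ : Fin n) = a := by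
      apply Fin.ext
      have : ((prIdx a : Fin n) : ℕ) = (a : ℕ) - 1 := rfl
      simp only [this]
      omega
    rw [this]
    exact ha'.2
  · intro b hb
    have hb' := (Finset.mem_filter.mp hb).2
    rw [Finset.mem_filter]
    refine ⟨Finset.mem_univ _, ?_, ?_⟩
    · show 0 < ((⟨(b : ℕ) + 1, hb'.choose⟩ : Fin n) : ℕ)
      simp
    have hpr : prIdx (⟨(b : ℕ) + 1, hb'.choose⟩ : Fin n) = b := by
      apply Fin.ext
      simp [prIdx]
    rw [hpr]
    exact hb'.choose_spec
  · intro a ha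
    have ha' := (Finset.mem_filter.mp ha).2
    apply Fin.ext
    have : ((prIdx a : Fin n) : ℕ) = (a : ℕ) - 1 := rfl
    simp only [this]
    omega
  · intro b hb
    apply Fin.ext
    simp [prIdx]

open scoped Classical in
lemma card_wcount (s₀ : ℕ) :
    ((Finset.univ : Finset (Equiv.Perm (Fin n))).filter fun σ => wcount σ = s₀).card
      = eulerianNumber n s₀ := by
  classical
  rw [eulerianNumber]
  refine Finset.card_bij' (fun σ _ => Fin.revPerm⁻¹ * σ) (fun π _ => Fin.revPerm * π)
    ?_ ?_ ?_ ?_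
  · intro σ hσ
    rw [Finset.mem_filter] at hσ ⊢
    refine ⟨Finset.mem_univ _, ?_⟩
    rw [← wcount_rev (Fin.revPerm⁻¹ * σ)]
    have : Fin.revPerm * (Fin.revPerm⁻¹ * σ) = σ := by group
    rw [this]
    exact hσ.2
  · intro π hπ
    rw [Finset.mem_filter] at hπ ⊢
    exact ⟨Finset.mem_univ _, by rw [wcount_rev]; exact hπ.2⟩
  · intro σ _
    show Fin.revPerm * (Fin.revPerm⁻¹ * σ) = σ
    group
  · intro π _
    show Fin.revPerm⁻¹ * (Fin.revPerm * π) = π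
    group

open scoped Classical in
lemma card_dcount (s₀ : ℕ) :
    ((Finset.univ : Finset (Equiv.Perm (Fin n))).filter fun σ => dcount σ = s₀).card
      = eulerianNumber n s₀ := by
  classical
  rw [← card_wcount s₀]
  refine Finset.card_bij' (fun σ _ => σ⁻¹) (fun τ _ => τ⁻¹) ?_ ?_ ?_ ?_
  · intro σ hσ
    rw [Finset.mem_filter] at hσ ⊢
    refine ⟨Finset.mem_univ _, ?_⟩
    have : wcount σ⁻¹ = dcount σ := rfl
    rw [this]
    exact hσ.2
  · intro τ hτ
    rw [Finset.mem_filter] at hτ ⊢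
    refine ⟨Finset.mem_univ _, ?_⟩
    have : dcount τ⁻¹ = wcount τ⁻¹⁻¹ := rfl
    rw [this, inv_inv]
    exact hτ.2
  · intro σ _; show σ⁻¹⁻¹ = σ; group
  · intro τ _; show τ⁻¹⁻¹ = τ; group

end Stmt14Aux

open Stmt14Aux in
/-- Laplace's theorem: the Lebesgue volume of the slab
`{x ∈ [0,1]^n : k-1 ≤ ∑ xᵢ ≤ k}` of the unit cube (the `k`-th hypersimplex slab) equals
`A(n, k-1)/n!`, where `A` is the Eulerian number. -/
theorem stmt14 (n k : ℕ) (hn : 1 ≤ n) (hk1 : 1 ≤ k) (hkn : k ≤ n) :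
    MeasureTheory.volume {x : Fin n → ℝ |
        (∀ i, 0 ≤ x i ∧ x i ≤ 1) ∧ (k : ℝ) - 1 ≤ ∑ i, x i ∧ ∑ i, x i ≤ k} =
      ENNReal.ofReal ((eulerianNumber n (k - 1) : ℝ) / (n.factorial : ℝ)) := by
  classical
  have hn0 : 0 < n := hn
  set S := {x : Fin n → ℝ |
      (∀ i, 0 ≤ x i ∧ x i ≤ 1) ∧ (k : ℝ) - 1 ≤ ∑ i, x i ∧ ∑ i, x i ≤ k} with hSdef
  set A : Finset (Equiv.Perm (Fin n)) :=
    Finset.univ.filter (fun σ => dcount σ = k - 1) with hA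
  have hcast : ((k - 1 : ℕ) : ℝ) = (k : ℝ) - 1 := by
    rw [Nat.cast_sub hk1, Nat.cast_one]
  have hGsubS : ∀ σ ∈ A, Fmap σ '' OC σ ⊆ S := by
    intro σ hσ y hy
    obtain ⟨x, hx, rfl⟩ := hy
    have hdc := (Finset.mem_filter.mp hσ).2
    have hb := fun i => Fmap_mem_Ioo hx i
    have hsum := sum_Fmap hn0 σ x
    have hxl := Set.mem_Ioo.mp (hx.1 ⟨n - 1, by omega⟩)
    refine ⟨fun i => ⟨(hb i).1.le, (hb i).2.le⟩, ?_, ?_⟩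
    · rw [hsum, hdc, hcast]
      linarith [hxl.1]
    · rw [hsum, hdc, hcast]
      linarith [hxl.2]
  have hvol_each : ∀ σ ∈ A, volume (Fmap σ '' OC σ) = ((n.factorial : ℝ≥0∞))⁻¹ :=
    fun σ _ => by rw [vol_Fmap_image, vol_OC_eq_inv_factorial]
  have hdisj : (A : Set (Equiv.Perm (Fin n))).PairwiseDisjoint
      (fun σ => Fmap σ '' OC σ) :=
    fun σ _ τ _ hne => image_disjoint hne
  have hmeas : ∀ σ ∈ A, MeasurableSet (Fmap σ '' OC σ) :=
    fun σ _ => measurableSet_Fmap_image σ (measurableSet_OC σ)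
  have hG : volume (⋃ σ ∈ A, Fmap σ '' OC σ)
      = (A.card : ℝ≥0∞) * ((n.factorial : ℝ≥0∞))⁻¹ := by
    rw [measure_biUnion_finset hdisj hmeas, Finset.sum_congr rfl hvol_each,
      Finset.sum_const, nsmul_eq_mul]
  have hSsub : S ⊆ (⋃ σ ∈ A, Fmap σ '' OC σ) ∪ BadSet2 := by
    intro y hy
    by_cases hbad : y ∈ BadSet2
    · right; exact hbad
    · left
      obtain ⟨σ, hdc, hmem⟩ := cover hn0 hk1 hy.1 hy.2.1 hy.2.2 hbad
      exact Set.mem_biUnion (Finset.mem_filter.mpr ⟨Finset.mem_univ _, hdc⟩) hmem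
  have h1 : volume S ≤ volume (⋃ σ ∈ A, Fmap σ '' OC σ) := by
    calc volume S ≤ volume ((⋃ σ ∈ A, Fmap σ '' OC σ) ∪ BadSet2) := measure_mono hSsub
      _ ≤ volume (⋃ σ ∈ A, Fmap σ '' OC σ) + volume (BadSet2 (n := n)) :=
          measure_union_le _ _
      _ = volume (⋃ σ ∈ A, Fmap σ '' OC σ) := by rw [null_BadSet2, add_zero]
  have h2 : volume (⋃ σ ∈ A, Fmap σ '' OC σ) ≤ volume S :=
    measure_mono (Set.iUnion₂_subset hGsubS)
  have hvol : volume S = (A.card : ℝ≥0∞) * ((n.factorial : ℝ≥0∞))⁻¹ :=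
    le_antisymm (le_trans h1 (le_of_eq hG)) (le_trans (le_of_eq hG.symm) h2)
  have hcard : A.card = eulerianNumber n (k - 1) := card_dcount (k - 1)
  rw [hvol, hcard]
  rw [ENNReal.ofReal_div_of_pos (by positivity), ENNReal.ofReal_natCast,
    ENNReal.ofReal_natCast, div_eq_mul_inv]
end

section
/- Let m ≥ 1 and let p_{jk} ∈ ℂ for 0 ≤ j < k ≤ m. Suppose: (1) (Plücker relations) p_{il}·p_{jk} − p_{ik}·p_{jl} + p_{ij}·p_{kl} = 0 for all 0 ≤ i < j < k < l ≤ m; and (2) there are positive real numbers c_{jk} > 0 such that for every integer w, ∑_{0≤j<k≤m, j+k=w} c_{jk}·p_{jk} = 0. Then p_{jk} = 0 for all 0 ≤ j < k ≤ m. -/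
/-- If complex numbers `p_{jk}` (`0 ≤ j < k ≤ m`) satisfy the three-term Plücker relations
and, for some positive reals `c_{jk}`, the linear relations
`∑_{j+k=w} c_{jk} p_{jk} = 0` for every `w`, then all `p_{jk}` vanish. -/
theorem stmt16 (m : ℕ) (hm : 1 ≤ m) (p : Fin (m + 1) → Fin (m + 1) → ℂ)
    (c : Fin (m + 1) → Fin (m + 1) → ℝ) (hc : ∀ j k, j < k → 0 < c j k)
    (hpl : ∀ i j k l : Fin (m + 1), i < j → j < k → k < l →
      p i l * p j k - p i k * p j l + p i j * p k l = 0)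
    (hlin : ∀ w : ℕ, (∑ j : Fin (m + 1), ∑ k : Fin (m + 1),
      if j < k ∧ (j : ℕ) + (k : ℕ) = w then (c j k : ℂ) * p j k else 0) = 0) :
    ∀ j k, j < k → p j k = 0 := by
  -- Extraction: if all other terms of a weight-`w` linear relation vanish, the remaining one does.
  have key : ∀ (w : ℕ) (a b : Fin (m+1)), a < b → (a:ℕ)+(b:ℕ) = w →
      (∀ J K : Fin (m+1), J < K → (J:ℕ)+(K:ℕ) = w → ¬(J = a ∧ K = b) → p J K = 0) →
      p a b = 0 := by
    intro w a b hab hw hz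
    have h2 : (∑ x : Fin (m+1) × Fin (m+1),
        if x.1 < x.2 ∧ (x.1:ℕ)+(x.2:ℕ) = w then (c x.1 x.2 : ℂ) * p x.1 x.2 else 0)
        = if a < b ∧ (a:ℕ)+(b:ℕ) = w then (c a b : ℂ) * p a b else 0 := by
      apply Fintype.sum_eq_single (a, b)
      intro x hx
      by_cases hcond : x.1 < x.2 ∧ (x.1:ℕ)+(x.2:ℕ) = w
      · have hp0 : p x.1 x.2 = 0 := hz x.1 x.2 hcond.1 hcond.2
          (fun hh => hx (Prod.ext hh.1 hh.2))
        rw [if_pos hcond, hp0, mul_zero]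
      · rw [if_neg hcond]
    rw [if_pos ⟨hab, hw⟩] at h2
    rw [Fintype.sum_prod_type] at h2
    have h3 : (c a b : ℂ) * p a b = 0 := by rw [← h2]; exact hlin w
    have hcne : (c a b : ℂ) ≠ 0 := Complex.ofReal_ne_zero.mpr (ne_of_gt (hc a b hab))
    exact (mul_eq_zero.mp h3).resolve_left hcne
  -- Transitivity through a low base point.
  have tlow : ∀ base s j k : Fin (m+1), base < j → j < k → base < s → s ≠ j → s ≠ k →
      p base j = 0 → p base k = 0 → p base s ≠ 0 → p j k = 0 := by
    intro base s j k hbj hjk hbs hsj hsk hj hk hs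
    have hmul : p base s * p j k = 0 := by
      rcases lt_trichotomy s j with h | h | h
      · have := hpl base s j k hbs h hjk
        rw [hj, hk] at this; linear_combination this
      · exact absurd h hsj
      · rcases lt_trichotomy s k with h' | h' | h'
        · have := hpl base j s k hbj h h'
          rw [hj, hk] at this; linear_combination -this
        · exact absurd h' hsk
        · have := hpl base j k s hbj hjk h'
          rw [hj, hk] at this; linear_combination this
    exact (mul_eq_zero.mp hmul).resolve_left hs
  -- Transitivity through a high top point.
  have thigh : ∀ top s j k : Fin (m+1), j < k → k < top → s < top → s ≠ j → s ≠ k →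
      p j top = 0 → p k top = 0 → p s top ≠ 0 → p j k = 0 := by
    intro top s j k hjk hkt hst hsj hsk hj hk hs
    have hmul : p s top * p j k = 0 := by
      rcases lt_trichotomy s j with h | h | h
      · have := hpl s j k top h hjk hkt
        rw [hj, hk] at this; linear_combination this
      · exact absurd h hsj
      · rcases lt_trichotomy s k with h' | h' | h'
        · have := hpl j s k top h h' hkt
          rw [hj, hk] at this; linear_combination -this
        · exact absurd h' hsk
        · have := hpl j k s top hjk h' hst
          rw [hj, hk] at this; linear_combination this
    exact (mul_eq_zero.mp hmul).resolve_left hs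
  -- Main induction on the level ℓ.
  have main : ∀ ℓ : ℕ, ∀ j k : Fin (m+1), j < k → ((j:ℕ) = ℓ ∨ (k:ℕ) = m - ℓ) → p j k = 0 := by
    intro ℓ
    induction ℓ using Nat.strong_induction_on with
    | _ ℓ ih =>
    have hout : ∀ j k : Fin (m+1), j < k → ((j:ℕ) < ℓ ∨ m - ℓ < (k:ℕ)) → p j k = 0 := by
      intro j k hjk h
      have hkm : (k:ℕ) < m + 1 := k.isLt
      rcases h with h | h
      · exact ih _ h j k hjk (Or.inl rfl)
      · exact ih (m - (k:ℕ)) (by omega) j k hjk (Or.inr (by omega))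
    -- Row ℓ within the band vanishes.
    have bandA : ∀ j k : Fin (m+1), (j:ℕ) = ℓ → j < k → (k:ℕ) ≤ m - ℓ → p j k = 0 := by
      intro j k hjl hjk hkb
      by_contra hne
      have sweep : ∀ w : ℕ, ∀ a b : Fin (m+1), ℓ ≤ (a:ℕ) → a < b → (b:ℕ) ≤ m - ℓ →
          (a:ℕ)+(b:ℕ) ≤ w → p a b = 0 := by
        intro w
        induction w using Nat.strong_induction_on with
        | _ w ihw =>
        intro a b hla hab hbb hwle
        rcases lt_or_eq_of_le hwle with hlt | hweq
        · exact ihw _ hlt a b hla hab hbb le_rfl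
        have habn : (a:ℕ) < (b:ℕ) := hab
        have hintr : ∀ a' b' : Fin (m+1), ℓ < (a':ℕ) → a' < b' → (b':ℕ) ≤ m - ℓ →
            (a':ℕ)+(b':ℕ) = w → p a' b' = 0 := by
          intro a' b' hla' hab' hbb' hw'
          have hab'n : (a':ℕ) < (b':ℕ) := hab'
          have hja' : p j a' = 0 :=
            ihw (ℓ + (a':ℕ)) (by omega) j a' hjl.ge
              (Fin.lt_def.mpr (by omega)) (by omega) (by omega)
          have hjb' : p j b' = 0 :=
            ihw (ℓ + (b':ℕ)) (by omega) j b' hjl.ge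
              (Fin.lt_def.mpr (by omega)) hbb' (by omega)
          by_cases hka' : k = a'
          · exact absurd (by rw [hka'] at hne ⊢; exact hja') hne
          by_cases hkb' : k = b'
          · exact absurd (by rw [hkb'] at hne ⊢; exact hjb') hne
          exact tlow j k a' b' (Fin.lt_def.mpr (by omega)) hab' hjk hka' hkb' hja' hjb' hne
        rcases Nat.lt_or_ge ℓ (a:ℕ) with hlt' | hge
        · exact hintr a b hlt' hab hbb hweq
        · have hal : (a:ℕ) = ℓ := le_antisymm hge hla
          apply key w a b hab hweq
          intro J K hJK hJw hne'
          have hJKn : (J:ℕ) < (K:ℕ) := hJK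
          rcases Nat.lt_trichotomy (J:ℕ) ℓ with h | h | h
          · exact hout J K hJK (Or.inl h)
          · exact absurd ⟨Fin.ext (by omega), Fin.ext (by omega)⟩ hne'
          · rcases le_or_gt (K:ℕ) (m - ℓ) with h' | h'
            · exact hintr J K h hJK h' hJw
            · exact hout J K hJK (Or.inr h')
      exact hne (sweep ((j:ℕ)+(k:ℕ)) j k (le_of_eq hjl.symm) hjk hkb le_rfl)
    -- Column m-ℓ within the band vanishes.
    have bandB : ∀ j k : Fin (m+1), (k:ℕ) = m - ℓ → j < k → ℓ ≤ (j:ℕ) → p j k = 0 := by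
      intro j k hkl hjk hlj
      by_contra hne
      have hjkn : (j:ℕ) < (k:ℕ) := hjk
      have sweep : ∀ d : ℕ, ∀ a b : Fin (m+1), ℓ ≤ (a:ℕ) → a < b → (b:ℕ) ≤ m - ℓ →
          2*m ≤ (a:ℕ)+(b:ℕ)+d → p a b = 0 := by
        intro d
        induction d with
        | zero =>
          intro a b hla hab hbb hw
          exfalso
          have h1 : (a:ℕ) < (b:ℕ) := hab
          have h2 : (b:ℕ) < m + 1 := b.isLt
          omega
        | succ d ihd =>
          intro a b hla hab hbb hw
          have habn : (a:ℕ) < (b:ℕ) := hab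
          rcases le_or_gt (2*m) ((a:ℕ)+(b:ℕ)+d) with hle | hgt
          · exact ihd a b hla hab hbb hle
          have hintr : ∀ a' b' : Fin (m+1), ℓ ≤ (a':ℕ) → a' < b' → (b':ℕ) < m - ℓ →
              (a':ℕ)+(b':ℕ) = (a:ℕ)+(b:ℕ) → p a' b' = 0 := by
            intro a' b' hla' hab' hbb' hww
            have hab'n : (a':ℕ) < (b':ℕ) := hab'
            have ha'k : p a' k = 0 :=
              ihd a' k hla' (Fin.lt_def.mpr (by omega)) (by omega) (by omega)
            have hb'k : p b' k = 0 :=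
              ihd b' k (by omega) (Fin.lt_def.mpr (by omega)) (by omega) (by omega)
            by_cases hja' : j = a'
            · exact absurd (by rw [hja'] at hne ⊢; exact ha'k) hne
            by_cases hjb' : j = b'
            · exact absurd (by rw [hjb'] at hne ⊢; exact hb'k) hne
            exact thigh k j a' b' hab' (Fin.lt_def.mpr (by omega)) hjk hja' hjb' ha'k hb'k hne
          rcases Nat.lt_or_ge (b:ℕ) (m - ℓ) with hlt | hge
          · exact hintr a b hla hab hlt rfl
          · have hbl : (b:ℕ) = m - ℓ := le_antisymm hbb hge
            apply key ((a:ℕ)+(b:ℕ)) a b hab rfl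
            intro J K hJK hJw hne'
            have hJKn : (J:ℕ) < (K:ℕ) := hJK
            rcases Nat.lt_or_ge (J:ℕ) ℓ with h | h
            · exact hout J K hJK (Or.inl h)
            · rcases Nat.lt_trichotomy (K:ℕ) (m - ℓ) with h' | h' | h'
              · exact hintr J K h hJK h' hJw
              · exact absurd ⟨Fin.ext (by omega), Fin.ext (by omega)⟩ hne'
              · exact hout J K hJK (Or.inr h')
      exact hne (sweep (2*m) j k hlj hjk (le_of_eq hkl) (by omega))
    intro j k hjk hdisj
    have hjkn : (j:ℕ) < (k:ℕ) := hjk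
    have hkm : (k:ℕ) < m + 1 := k.isLt
    rcases hdisj with h | h
    · rcases le_or_gt (k:ℕ) (m - ℓ) with h' | h'
      · exact bandA j k h hjk h'
      · exact hout j k hjk (Or.inr h')
    · rcases le_or_gt ℓ (j:ℕ) with h' | h'
      · exact bandB j k h hjk h'
      · exact hout j k hjk (Or.inl h')
  intro j k hjk
  exact main (j:ℕ) j k hjk (Or.inl rfl)
end

section
/- Let a_1, …, a_n ∈ ℝ^c be points whose affine span is all of ℝ^c. Then the map μ : ℝ^c → ℝ^c defined by μ(τ) = (∑_{i=1}^n exp(−⟨τ, a_i⟩)·a_i)/(∑_{i=1}^n exp(−⟨τ, a_i⟩)) is a bijection from ℝ^c onto the interior of the convex hull of {a_1, …, a_n}. -/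
open scoped RealInnerProductSpace

section MomentMapAux
open Finset
set_option linter.unusedSectionVars false

variable {E : Type*} [NormedAddCommGroup E] [InnerProductSpace ℝ E] [FiniteDimensional ℝ E]

lemma momNE {n : ℕ} (a : Fin n → E) (hspan : affineSpan ℝ (Set.range a) = ⊤) :
    Nonempty (Fin n) := by
  rcases Nat.eq_zero_or_pos n with h | h
  · exfalso
    subst h
    rw [Set.range_eq_empty, AffineSubspace.span_empty] at hspan
    have h0 : (0 : E) ∈ (⊥ : AffineSubspace ℝ E) := hspan ▸ AffineSubspace.mem_top ℝ E 0
    exact AffineSubspace.notMem_bot ℝ E 0 h0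
  · exact ⟨⟨0, h⟩⟩

lemma momA {n : ℕ} (a : Fin n → E) (hspan : affineSpan ℝ (Set.range a) = ⊤)
    (w : Fin n → ℝ) (hw : ∀ i, 0 < w i) :
    (∑ i, w i)⁻¹ • ∑ i, w i • a i ∈ interior (convexHull ℝ (Set.range a)) := by
  have hne : Nonempty (Fin n) := momNE a hspan
  obtain ⟨y, hy⟩ := (interior_convexHull_nonempty_iff_affineSpan_eq_top (s := Set.range a)).2 hspan
  have hyhull : y ∈ convexHull ℝ (Set.range a) := interior_subset hy
  rw [convexHull_range_eq_exists_affineCombination] at hyhull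
  obtain ⟨s, wy, hwy0, hwy1, hyeq⟩ := hyhull
  set v : Fin n → ℝ := fun i => if i ∈ s then wy i else 0 with hv
  have hv0 : ∀ i, 0 ≤ v i := by
    intro i; simp only [hv]; split
    · exact hwy0 _ ‹_›
    · exact le_refl _
  have hv1 : ∑ i, v i = 1 := by
    rw [hv, Finset.sum_ite_mem, Finset.univ_inter]; exact hwy1
  have hvle : ∀ i, v i ≤ 1 := by
    intro i
    rw [← hv1]
    exact Finset.single_le_sum (fun j _ => hv0 j) (Finset.mem_univ i)
  have hyv : y = ∑ i, v i • a i := by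
    rw [← hyeq, s.affineCombination_eq_linear_combination a wy hwy1, hv]
    simp only [ite_smul, zero_smul]
    rw [Finset.sum_ite_mem, Finset.univ_inter]
  -- normalized weights
  have hW : 0 < ∑ i, w i := Finset.sum_pos (fun i _ => hw i) Finset.univ_nonempty
  set u : Fin n → ℝ := fun i => w i / (∑ j, w j) with hu
  have hu0 : ∀ i, 0 < u i := fun i => div_pos (hw i) hW
  have hu1 : ∑ i, u i = 1 := by
    rw [hu, ← Finset.sum_div, div_self hW.ne']
  have hx : (∑ i, w i)⁻¹ • ∑ i, w i • a i = ∑ i, u i • a i := by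
    rw [Finset.smul_sum]
    exact Finset.sum_congr rfl fun i _ => by rw [smul_smul, hu]; ring_nf
  rw [hx]
  -- min of u
  set m : ℝ := Finset.univ.inf' Finset.univ_nonempty u with hm
  have hm0 : 0 < m := by
    obtain ⟨i, -, hi⟩ := Finset.exists_mem_eq_inf' Finset.univ_nonempty u
    rw [hm, hi]; exact hu0 i
  have hmle : ∀ i, m ≤ u i := fun i => Finset.inf'_le u (Finset.mem_univ i)
  have hm1 : m ≤ 1 := le_trans (hmle (Classical.arbitrary _)) (by
    calc u (Classical.arbitrary _) ≤ ∑ i, u i :=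
      Finset.single_le_sum (fun j _ => (hu0 j).le) (Finset.mem_univ _)
    _ = 1 := hu1)
  set δ : ℝ := m / 2 with hδ
  have hδ0 : 0 < δ := by positivity
  have hδ1 : δ < 1 := by rw [hδ]; linarith
  set g : Fin n → ℝ := fun i => (u i - δ * v i) / (1 - δ) with hg
  have hg0 : ∀ i, 0 ≤ g i := by
    intro i
    apply div_nonneg _ (by linarith)
    have : δ * v i ≤ δ * 1 := by
      apply mul_le_mul_of_nonneg_left (hvle i) hδ0.le
    have : δ * v i ≤ m / 2 := by rw [← hδ]; linarith
    have := hmle i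
    linarith
  have hg1 : ∑ i, g i = 1 := by
    rw [hg, ← Finset.sum_div]
    rw [Finset.sum_sub_distrib, hu1, ← Finset.mul_sum, hv1, mul_one]
    exact div_self (by linarith)
  have hz : ∑ i, g i • a i ∈ convexHull ℝ (Set.range a) := by
    apply Convex.sum_mem (convex_convexHull ℝ _) (fun i _ => hg0 i) hg1
    exact fun i _ => subset_convexHull ℝ _ ⟨i, rfl⟩
  have hcombo : ∑ i, u i • a i = δ • y + (1 - δ) • ∑ i, g i • a i := by
    rw [hyv, Finset.smul_sum, Finset.smul_sum, ← Finset.sum_add_distrib]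
    refine Finset.sum_congr rfl fun i _ => ?_
    rw [smul_smul, smul_smul, hg]
    rw [← add_smul]
    congr 1
    have h1δ : (1:ℝ) - δ ≠ 0 := by linarith
    field_simp
    ring
  rw [hcombo]
  exact (convex_convexHull ℝ _).combo_interior_self_mem_interior hy hz hδ0 (by linarith)
    (by ring)

variable {E : Type*} [NormedAddCommGroup E] [InnerProductSpace ℝ E] [FiniteDimensional ℝ E]

lemma momInj {n : ℕ} (a : Fin n → E) (hspan : affineSpan ℝ (Set.range a) = ⊤)
    {τ σ : E}
    (h : (∑ i, Real.exp (-⟪τ, a i⟫))⁻¹ • ∑ i, Real.exp (-⟪τ, a i⟫) • a i =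
      (∑ i, Real.exp (-⟪σ, a i⟫))⁻¹ • ∑ i, Real.exp (-⟪σ, a i⟫) • a i) : τ = σ := by
  by_contra hts
  set v : E := σ - τ with hvdef
  have hv : v ≠ 0 := sub_ne_zero.2 (Ne.symm hts)
  set d : Fin n → ℝ := fun i => ⟪v, a i⟫ with hd
  set p : Fin n → ℝ := fun i => Real.exp (-⟪τ, a i⟫) with hp
  have hp0 : ∀ i, 0 < p i := fun i => Real.exp_pos _
  have hq : ∀ i, Real.exp (-⟪σ, a i⟫) = p i * Real.exp (-(d i)) := by
    intro i
    rw [hp, ← Real.exp_add]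
    congr 1
    have : σ = τ + v := by rw [hvdef]; abel
    rw [this, inner_add_left]
    ring
  -- there exist indices with different d values
  have hdiff : ∃ i j, d i ≠ d j := by
    by_contra hcon
    push_neg at hcon
    have hvs : vectorSpan ℝ (Set.range a) = ⊤ := by
      rw [← direction_affineSpan, hspan, AffineSubspace.direction_top]
    have hvmem : v ∈ vectorSpan ℝ (Set.range a) := hvs ▸ Submodule.mem_top
    rw [vectorSpan_def] at hvmem
    have hzero : ⟪v, v⟫ = 0 := by
      refine Submodule.span_induction (p := fun x _ => (⟪v, x⟫ : ℝ) = 0) ?_ ?_ ?_ ?_ hvmem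
      · rintro x ⟨x1, ⟨i, rfl⟩, x2, ⟨j, rfl⟩, rfl⟩
        show (⟪v, a i -ᵥ a j⟫ : ℝ) = 0
        rw [vsub_eq_sub, inner_sub_right]
        have := hcon i j
        simp only [hd] at this
        linarith
      · exact inner_zero_right v
      · intro x y _ _ hx hy
        rw [inner_add_right, hx, hy]; ring
      · intro r x _ hx
        rw [real_inner_smul_right, hx]; ring
    exact hv (inner_self_eq_zero.1 hzero)
  obtain ⟨i₀, j₀, hij⟩ := hdiff
  have hpe : ∀ i, Real.exp (-⟪τ, a i⟫) = p i := fun _ => rfl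
  simp only [hpe, hq] at h
  have hinner : ∀ (w : Fin n → ℝ),
      ⟪v, (∑ i, w i)⁻¹ • ∑ i, w i • a i⟫ = (∑ i, w i)⁻¹ * ∑ i, w i * d i := by
    intro w
    rw [real_inner_smul_right, inner_sum]
    congr 1
    exact Finset.sum_congr rfl fun i _ => real_inner_smul_right _ _ _
  have e1 := hinner p
  have e2 := hinner (fun i => p i * Real.exp (-(d i)))
  rw [← h] at e2
  -- the four sums
  set A : ℝ := ∑ i, p i with hA
  set B : ℝ := ∑ i, p i * d i with hB
  set C : ℝ := ∑ i, p i * Real.exp (-(d i)) with hC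
  set D : ℝ := ∑ i, p i * d i * Real.exp (-(d i)) with hD
  have hApos : 0 < A := Finset.sum_pos (fun i _ => hp0 i) ⟨i₀, Finset.mem_univ i₀⟩
  have hCpos : 0 < C := Finset.sum_pos
    (fun i _ => mul_pos (hp0 i) (Real.exp_pos _)) ⟨i₀, Finset.mem_univ i₀⟩
  set S : ℝ := ∑ i, ∑ j, p i * p j *
    ((d i - d j) * (Real.exp (-(d j)) - Real.exp (-(d i)))) with hS
  have hterm : ∀ i j : Fin n,
      0 ≤ p i * p j * ((d i - d j) * (Real.exp (-(d j)) - Real.exp (-(d i)))) := by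
    intro i j
    apply mul_nonneg (mul_pos (hp0 i) (hp0 j)).le
    rcases le_total (d i) (d j) with hle | hle
    · have : Real.exp (-(d j)) ≤ Real.exp (-(d i)) := Real.exp_le_exp.2 (by linarith)
      nlinarith
    · have : Real.exp (-(d i)) ≤ Real.exp (-(d j)) := Real.exp_le_exp.2 (by linarith)
      exact mul_nonneg (by linarith) (by linarith)
  have htermpos :
      0 < p i₀ * p j₀ * ((d i₀ - d j₀) * (Real.exp (-(d j₀)) - Real.exp (-(d i₀)))) := by
    apply mul_pos (mul_pos (hp0 i₀) (hp0 j₀))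
    rcases lt_or_gt_of_ne hij with hlt | hlt
    · have : Real.exp (-(d j₀)) < Real.exp (-(d i₀)) := Real.exp_lt_exp.2 (by linarith)
      exact mul_pos_of_neg_of_neg (by linarith) (by linarith)
    · have : Real.exp (-(d i₀)) < Real.exp (-(d j₀)) := Real.exp_lt_exp.2 (by linarith)
      exact mul_pos (by linarith) (by linarith)
  have hSpos : 0 < S := by
    rw [hS]
    apply Finset.sum_pos' (fun i _ => Finset.sum_nonneg fun j _ => hterm i j)
    exact ⟨i₀, Finset.mem_univ i₀,
      Finset.sum_pos' (fun j _ => hterm i₀ j) ⟨j₀, Finset.mem_univ j₀, htermpos⟩⟩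
  have hsplit : S = B * C - D * A - A * D + C * B := by
    rw [hB, hC, hD, hA, Finset.sum_mul_sum, Finset.sum_mul_sum, Finset.sum_mul_sum,
      Finset.sum_mul_sum, hS]
    rw [← Finset.sum_sub_distrib, ← Finset.sum_sub_distrib, ← Finset.sum_add_distrib]
    refine Finset.sum_congr rfl fun i _ => ?_
    rw [← Finset.sum_sub_distrib, ← Finset.sum_sub_distrib, ← Finset.sum_add_distrib]
    exact Finset.sum_congr rfl fun j _ => by ring
  have hkey : A * D < B * C := by linarith
  have hDe : ∑ i, p i * Real.exp (-(d i)) * d i = D := by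
    rw [hD]; exact Finset.sum_congr rfl fun i _ => by ring
  rw [e1, hDe] at e2
  -- e2 : A⁻¹ * B = C⁻¹ * D
  have : B * C = A * D := by
    field_simp at e2
    nlinarith [e2, hApos, hCpos]
  linarith

variable {E : Type*} [NormedAddCommGroup E] [InnerProductSpace ℝ E] [FiniteDimensional ℝ E]

lemma momSurj {n : ℕ} (a : Fin n → E) (hne : Nonempty (Fin n)) {b : E}
    (hb : b ∈ interior (convexHull ℝ (Set.range a))) :
    ∃ τ, (∑ i, Real.exp (-⟪τ, a i⟫))⁻¹ • ∑ i, Real.exp (-⟪τ, a i⟫) • a i = b := by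
  obtain ⟨ε, hε, hball⟩ := Metric.isOpen_iff.1 isOpen_interior b hb
  have hballhull : Metric.ball b ε ⊆ convexHull ℝ (Set.range a) :=
    hball.trans interior_subset
  set H : E → ℝ := fun τ => ∑ i, Real.exp ⟪τ, b - a i⟫ with hH
  -- lower bound
  have hlow : ∀ τ : E, ∃ j, ε / 2 * ‖τ‖ ≤ ⟪τ, b - a j⟫ := by
    intro τ
    rcases eq_or_ne τ 0 with rfl | hτ
    · exact ⟨Classical.arbitrary _, by simp⟩
    · have hτn : (0:ℝ) < ‖τ‖ := norm_pos_iff.2 hτ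
      set q : E := b - (ε / 2 / ‖τ‖) • τ with hqdef
      have hq : q ∈ convexHull ℝ (Set.range a) := by
        apply hballhull
        rw [Metric.mem_ball, dist_eq_norm]
        have : q - b = -((ε / 2 / ‖τ‖) • τ) := by rw [hqdef]; abel
        rw [this, norm_neg, norm_smul, Real.norm_eq_abs, abs_of_pos (by positivity)]
        rw [div_mul_cancel₀ _ hτn.ne']
        linarith
      -- halfspace bound
      obtain ⟨j, -, hj⟩ := Finset.exists_min_image Finset.univ
        (fun i => (⟪τ, a i⟫ : ℝ)) (Finset.univ_nonempty (α := Fin n))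
      have hhalf : convexHull ℝ (Set.range a) ⊆
          {x : E | (⟪τ, a j⟫ : ℝ) ≤ ⟪τ, x⟫} := by
        apply convexHull_min
        · rintro x ⟨i, rfl⟩
          exact hj i (Finset.mem_univ i)
        · exact convex_halfSpace_ge
            ⟨fun x y => inner_add_right _ _ _, fun c x => real_inner_smul_right _ _ _⟩ _
      refine ⟨j, ?_⟩
      have h1 : (⟪τ, a j⟫ : ℝ) ≤ ⟪τ, q⟫ := hhalf hq
      have h2 : (⟪τ, q⟫ : ℝ) = ⟪τ, b⟫ - ε / 2 * ‖τ‖ := by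
        rw [hqdef, inner_sub_right, real_inner_smul_right, real_inner_self_eq_norm_sq]
        field_simp
      rw [inner_sub_right]
      linarith
  have hcont : Continuous H :=
    continuous_finset_sum _ fun i _ => Real.continuous_exp.comp
      (continuous_id.inner continuous_const)
  have hcoer : Filter.Tendsto H (Filter.cocompact E) Filter.atTop := by
    apply Filter.tendsto_atTop_mono _
      ((tendsto_norm_cocompact_atTop).const_mul_atTop (by positivity : (0:ℝ) < ε / 2))
    intro τ
    obtain ⟨j, hj⟩ := hlow τ
    calc ε / 2 * ‖τ‖ ≤ ⟪τ, b - a j⟫ := hj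
    _ ≤ Real.exp ⟪τ, b - a j⟫ := by linarith [Real.add_one_le_exp (⟪τ, b - a j⟫ : ℝ)]
    _ ≤ H τ := Finset.single_le_sum (f := fun i => Real.exp (⟪τ, b - a i⟫ : ℝ))
      (fun i _ => (Real.exp_pos _).le) (Finset.mem_univ j)
  obtain ⟨τ₀, hτ₀⟩ := hcont.exists_forall_le hcoer
  -- gradient is zero at the minimum
  have hgrad : ∀ v : E, ∑ i, Real.exp ⟪τ₀, b - a i⟫ * ⟪v, b - a i⟫ = 0 := by
    intro v
    set φ : ℝ → ℝ := fun t => ∑ i, Real.exp (⟪τ₀, b - a i⟫ + t * ⟪v, b - a i⟫) with hφ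
    have hφH : ∀ t, φ t = H (τ₀ + t • v) := by
      intro t
      refine Finset.sum_congr rfl fun i _ => ?_
      rw [inner_add_left, real_inner_smul_left]
    have hmin : IsLocalMin φ 0 := by
      apply Filter.Eventually.of_forall
      intro t
      rw [hφH, hφH]
      simpa using hτ₀ (τ₀ + t • v)
    have hder : HasDerivAt φ (∑ i, Real.exp ⟪τ₀, b - a i⟫ * ⟪v, b - a i⟫) 0 := by
      apply HasDerivAt.fun_sum
      intro i _
      have h1 : HasDerivAt (fun t : ℝ => (⟪τ₀, b - a i⟫ : ℝ) + t * ⟪v, b - a i⟫)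
          (⟪v, b - a i⟫ : ℝ) 0 := by
        simpa using ((hasDerivAt_id (0:ℝ)).mul_const (⟪v, b - a i⟫ : ℝ)).const_add
          (⟪τ₀, b - a i⟫ : ℝ)
      simpa using h1.exp
    exact hmin.hasDerivAt_eq_zero hder
  have hsum0 : ∑ i, Real.exp ⟪τ₀, b - a i⟫ • (b - a i) = 0 := by
    set z : E := ∑ i, Real.exp ⟪τ₀, b - a i⟫ • (b - a i) with hz
    have : (⟪z, z⟫ : ℝ) = 0 := by
      nth_rewrite 2 [hz]
      rw [inner_sum]
      simp only [real_inner_smul_right]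
      exact hgrad z
    exact inner_self_eq_zero.1 this
  -- convert to the μ formula
  refine ⟨τ₀, ?_⟩
  have hsplit : ∀ i : Fin n, Real.exp ⟪τ₀, b - a i⟫ =
      Real.exp ⟪τ₀, b⟫ * Real.exp (-⟪τ₀, a i⟫) := by
    intro i
    rw [← Real.exp_add, inner_sub_right]
    ring_nf
  set p : Fin n → ℝ := fun i => Real.exp (-⟪τ₀, a i⟫) with hp
  have hP : (0:ℝ) < ∑ i, p i := Finset.sum_pos (fun i _ => Real.exp_pos _)
    Finset.univ_nonempty
  have hsum0' : (∑ i, p i) • b = ∑ i, p i • a i := by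
    have h2 : Real.exp ⟪τ₀, b⟫ • ((∑ i, p i) • b - ∑ i, p i • a i) = 0 := by
      rw [Finset.sum_smul, ← Finset.sum_sub_distrib, Finset.smul_sum, ← hsum0]
      refine Finset.sum_congr rfl fun i _ => ?_
      rw [hsplit i, ← smul_sub, smul_smul]
    rcases smul_eq_zero.1 h2 with h3 | h3
    · exact absurd h3 (Real.exp_pos _).ne'
    · exact sub_eq_zero.1 h3
  rw [← hsum0', inv_smul_smul₀ hP.ne']

end MomentMapAux

/-- Moment-map bijection for discrete exponential families: if the points
`a₁, …, a_n ∈ ℝ^c` affinely span `ℝ^c`, then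
`μ(τ) = (∑ᵢ exp(-⟨τ,aᵢ⟩) • aᵢ) / (∑ᵢ exp(-⟨τ,aᵢ⟩))` is a bijection from `ℝ^c` onto the
interior of the convex hull of `{a₁, …, a_n}`. -/
theorem stmt18 {n c : ℕ} (a : Fin n → EuclideanSpace ℝ (Fin c))
    (hspan : affineSpan ℝ (Set.range a) = ⊤)
    (μ : EuclideanSpace ℝ (Fin c) → EuclideanSpace ℝ (Fin c))
    (hμ : ∀ τ, μ τ = (∑ i, Real.exp (-⟪τ, a i⟫))⁻¹ •
      ∑ i, Real.exp (-⟪τ, a i⟫) • a i) :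
    Set.BijOn μ Set.univ (interior (convexHull ℝ (Set.range a))) := by
  refine ⟨?_, ?_, ?_⟩
  · intro τ _
    rw [hμ τ]
    exact momA a hspan _ (fun i => Real.exp_pos _)
  · intro τ _ σ _ h
    rw [hμ τ, hμ σ] at h
    exact momInj a hspan h
  · intro b hb
    obtain ⟨τ, hτ⟩ := momSurj a (momNE a hspan) hb
    exact ⟨τ, Set.mem_univ τ, by rw [hμ τ]; exact hτ⟩
end
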